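/- arXiv:math/0512447 — 2 statements merged into one kernel-verified Lean document; each statement's English description precedes it below -/
import Mathlib

section
/- Let V > 2π and 0 ≤ y < 1. Then ∫_{2π}^{V} | Σ_{1 ≤ n ≤ √(t/(2π))} e(-ny) n^{-1/2 + it} |^4 dt ≪ V (log V)^{10}, with an absolute implied constant. -/
open Complex Real Finset MeasureTheory intervalIntegral

/-- `e(x) = exp(2πix)`. -/
noncomputable def eFun (x : ℝ) : ℂ := Complex.exp (2 * π * Complex.I * x)


lemma harmonic_le (K : ℕ) : ∑ n ∈ Finset.Icc 1 K, (1:ℝ)/n ≤ Real.log K + 1 := by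
  induction K with
  | zero => simp
  | succ k ih =>
    rw [Finset.sum_Icc_succ_top (Nat.one_le_iff_ne_zero.mpr (Nat.succ_ne_zero k))]
    rcases Nat.eq_zero_or_pos k with hk | hk
    · subst hk; norm_num
    · have hk' : (0:ℝ) < k := by exact_mod_cast hk
      have h1 : Real.log ((k:ℝ)/(k+1)) ≤ (k:ℝ)/(k+1) - 1 :=
        Real.log_le_sub_one_of_pos (by positivity)
      have h2 : Real.log ((k:ℝ)/(k+1)) = Real.log k - Real.log (k+1) :=
        Real.log_div (by positivity) (by positivity)
      have h3 : (1:ℝ)/(k+1) ≤ Real.log (k+1) - Real.log k := by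
        rw [h2] at h1
        have : (k:ℝ)/(k+1) - 1 = -(1/(k+1)) := by field_simp; ring
        linarith [h1.trans_eq this]
      have : ((k:ℕ)+1 : ℝ) = ((k+1 : ℕ) : ℝ) := by push_cast; ring
      push_cast
      linarith [ih]

lemma sqrtsum_le (K : ℕ) : ∑ n ∈ Finset.Icc 1 K, (1:ℝ)/Real.sqrt n ≤ 2 * Real.sqrt K := by
  induction K with
  | zero => simp
  | succ k ih =>
    rw [Finset.sum_Icc_succ_top (Nat.one_le_iff_ne_zero.mpr (Nat.succ_ne_zero k))]
    have ha : Real.sqrt k ^ 2 = (k:ℝ) := Real.sq_sqrt (by positivity)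
    have hb : Real.sqrt ((k:ℝ)+1) ^ 2 = (k:ℝ)+1 := Real.sq_sqrt (by positivity)
    have hbpos : 0 < Real.sqrt ((k:ℝ)+1) := Real.sqrt_pos.mpr (by positivity)
    have hanneg : 0 ≤ Real.sqrt k := Real.sqrt_nonneg _
    have hle : Real.sqrt (k:ℝ) ≤ Real.sqrt ((k:ℝ)+1) := Real.sqrt_le_sqrt (by linarith)
    have key : (1:ℝ)/Real.sqrt ((k:ℝ)+1) ≤ 2 * Real.sqrt ((k:ℝ)+1) - 2 * Real.sqrt k := by
      rw [div_le_iff₀ hbpos]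
      nlinarith [hbpos, hanneg, hle]
    push_cast
    push_cast at ih
    linarith [ih, key]

lemma sqrt2_le : Real.sqrt 2 ≤ 3/2 := by
  nlinarith [Real.sq_sqrt (by norm_num : (0:ℝ) ≤ 2), Real.sqrt_nonneg 2]

set_option maxHeartbeats 1000000 in
lemma key_pointwise_lt {P Q : ℕ} (hP : 1 ≤ P) (hlt : P < Q) :
    (1/(Real.sqrt P * Real.sqrt Q)) * (2/|Real.log P - Real.log Q|)
      ≤ 4/(Real.sqrt P * Real.sqrt Q) + 3/|(P:ℝ) - Q| := by
  have hp : (1:ℝ) ≤ (P:ℝ) := by exact_mod_cast hP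
  have hq : (P:ℝ) < (Q:ℝ) := by exact_mod_cast hlt
  have hp0 : (0:ℝ) < P := by linarith
  have hq0 : (0:ℝ) < Q := by linarith
  have hsp : 0 < Real.sqrt P := Real.sqrt_pos.mpr hp0
  have hsq : 0 < Real.sqrt Q := Real.sqrt_pos.mpr hq0
  have hsp2 : Real.sqrt P ^ 2 = (P:ℝ) := Real.sq_sqrt hp0.le
  have hsq2 : Real.sqrt Q ^ 2 = (Q:ℝ) := Real.sq_sqrt hq0.le
  have hlogle : Real.log ((P:ℝ)/Q) ≤ (P:ℝ)/Q - 1 := Real.log_le_sub_one_of_pos (by positivity)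
  have hlogdiv : Real.log ((P:ℝ)/Q) = Real.log P - Real.log Q :=
    Real.log_div (by positivity) (by positivity)
  have hlog : ((Q:ℝ) - P)/Q ≤ Real.log Q - Real.log P := by
    rw [hlogdiv] at hlogle
    have : (P:ℝ)/Q - 1 = -(((Q:ℝ)-P)/Q) := by field_simp; ring
    linarith [hlogle.trans_eq this]
  have hlogpos : 0 < Real.log Q - Real.log P := by
    have : (0:ℝ) < ((Q:ℝ)-P)/Q := div_pos (by linarith) hq0
    linarith
  have habslog : |Real.log P - Real.log Q| = Real.log Q - Real.log P := by
    rw [abs_sub_comm]; exact abs_of_pos hlogpos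
  have habs : |(P:ℝ) - Q| = (Q:ℝ) - P := by rw [abs_sub_comm]; exact abs_of_pos (by linarith)
  rw [habslog, habs]
  have hQP : ((Q:ℝ) - P) ≤ (Real.log Q - Real.log P) * Q := (div_le_iff₀ hq0).mp hlog
  have step1 : (2:ℝ)/(Real.log Q - Real.log P) ≤ 2*Q/((Q:ℝ)-P) := by
    rw [div_le_div_iff₀ hlogpos (by linarith)]
    nlinarith [hQP]
  have hmain : (1/(Real.sqrt P * Real.sqrt Q)) * (2/(Real.log Q - Real.log P))
      ≤ (1/(Real.sqrt P * Real.sqrt Q)) * (2*Q/((Q:ℝ)-P)) :=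
    mul_le_mul_of_nonneg_left step1 (by positivity)
  refine hmain.trans ?_
  rcases le_or_gt (Q:ℝ) (2*P) with hc | hc
  · have h2Q : 2*(Q:ℝ) ≤ 3*(Real.sqrt P * Real.sqrt Q) := by
      have hsq' : Real.sqrt Q ≤ Real.sqrt 2 * Real.sqrt P := by
        rw [← Real.sqrt_mul (by norm_num : (0:ℝ) ≤ 2)]
        exact Real.sqrt_le_sqrt (by linarith)
      have h1 : 2*Real.sqrt Q ≤ 3*Real.sqrt P := by
        nlinarith [sqrt2_le, hsp, Real.sqrt_nonneg (2:ℝ)]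
      calc 2*(Q:ℝ) = Real.sqrt Q * (2*Real.sqrt Q) := by
            rw [show Real.sqrt (Q:ℝ) * (2 * Real.sqrt (Q:ℝ)) = 2 * Real.sqrt (Q:ℝ) ^ 2 by ring, hsq2]
        _ ≤ Real.sqrt Q * (3*Real.sqrt P) := mul_le_mul_of_nonneg_left h1 hsq.le
        _ = 3*(Real.sqrt P * Real.sqrt Q) := by ring
    have h1 : (1/(Real.sqrt P * Real.sqrt Q)) * (2*Q/((Q:ℝ)-P)) ≤ 3/((Q:ℝ)-P) := by
      have hD : (0:ℝ) < (Q:ℝ)-P := by linarith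
      rw [div_mul_div_comm, one_mul, div_le_div_iff₀ (mul_pos (mul_pos hsp hsq) hD) hD]
      nlinarith [mul_le_mul_of_nonneg_right h2Q hD.le]
    refine h1.trans ?_
    have : (0:ℝ) ≤ 4/(Real.sqrt P * Real.sqrt Q) := by positivity
    linarith
  · have h2 : 2*(Q:ℝ)/((Q:ℝ)-P) ≤ 4 := by
      rw [div_le_iff₀ (by linarith)]; linarith
    have h1 : (1/(Real.sqrt P * Real.sqrt Q)) * (2*Q/((Q:ℝ)-P))
        ≤ (1/(Real.sqrt P * Real.sqrt Q)) * 4 :=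
      mul_le_mul_of_nonneg_left h2 (by positivity)
    have h3 : (0:ℝ) ≤ 3/((Q:ℝ)-P) := le_of_lt (div_pos (by norm_num) (by linarith))
    calc (1/(Real.sqrt P * Real.sqrt Q)) * (2*Q/((Q:ℝ)-P))
        ≤ (1/(Real.sqrt P * Real.sqrt Q)) * 4 := h1
      _ = 4/(Real.sqrt P * Real.sqrt Q) := by ring
      _ ≤ _ := by linarith

lemma key_pointwise {P Q : ℕ} (hP : 1 ≤ P) (hQ : 1 ≤ Q) (hne : P ≠ Q) :
    (1/(Real.sqrt P * Real.sqrt Q)) * (2/|Real.log P - Real.log Q|)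
      ≤ 4/(Real.sqrt P * Real.sqrt Q) + 3/|(P:ℝ) - Q| := by
  rcases lt_or_gt_of_ne hne with h | h
  · exact key_pointwise_lt hP h
  · have := key_pointwise_lt hQ h
    rw [abs_sub_comm (Real.log Q), abs_sub_comm ((Q:ℝ))] at this
    calc (1/(Real.sqrt P * Real.sqrt Q)) * (2/|Real.log P - Real.log Q|)
        = (1/(Real.sqrt Q * Real.sqrt P)) * (2/|Real.log P - Real.log Q|) := by ring_nf
      _ ≤ 4/(Real.sqrt Q * Real.sqrt P) + 3/|(P:ℝ) - Q| := this
      _ = _ := by ring_nf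

lemma factor_bounds {g u a K : ℕ} (h : g * u = a) (ha : 1 ≤ a) (haK : a ≤ K) :
    (1 ≤ g ∧ g ≤ K) ∧ (1 ≤ u ∧ u ≤ K) := by
  have hg : 1 ≤ g := by
    rcases Nat.eq_zero_or_pos g with h0 | h0
    · subst h0; simp at h; omega
    · exact h0
  have hu : 1 ≤ u := by
    rcases Nat.eq_zero_or_pos u with h0 | h0
    · subst h0; simp at h; omega
    · exact h0
  refine ⟨⟨hg, ?_⟩, ⟨hu, ?_⟩⟩
  · exact le_trans (by calc g = g*1 := by ring
                             _ ≤ g*u := Nat.mul_le_mul_left g hu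
                             _ = a := h) haK
  · exact le_trans (by calc u = 1*u := by ring
                             _ ≤ g*u := Nat.mul_le_mul_right u hg
                             _ = a := h) haK

lemma quad_struct {a b c d : ℕ} (ha : 1 ≤ a) (hb : 1 ≤ b) (hc : 1 ≤ c) (hd : 1 ≤ d)
    (h : a * b = c * d) :
    Nat.gcd a c * (a / Nat.gcd a c) = a ∧
    Nat.gcd a c * (c / Nat.gcd a c) = c ∧
    (c / Nat.gcd a c) * (b / (c / Nat.gcd a c)) = b ∧
    (a / Nat.gcd a c) * (b / (c / Nat.gcd a c)) = d := by
  set g := Nat.gcd a c with hg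
  have hg0 : 0 < g := Nat.gcd_pos_of_pos_left c (by omega)
  have hga : g ∣ a := Nat.gcd_dvd_left a c
  have hgc : g ∣ c := Nat.gcd_dvd_right a c
  set u := a / g with hu
  set v := c / g with hv
  have hau : g * u = a := Nat.mul_div_cancel' hga
  have hcv : g * v = c := Nat.mul_div_cancel' hgc
  have hcop : Nat.Coprime u v := Nat.coprime_div_gcd_div_gcd hg0
  have hub : u * b = v * d := by
    have : g * (u * b) = g * (v * d) := by
      rw [← mul_assoc, ← mul_assoc, hau, hcv, h]
    exact Nat.eq_of_mul_eq_mul_left hg0 this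
  have hvb : v ∣ b := by
    have : v ∣ u * b := ⟨d, hub⟩
    exact (Nat.Coprime.dvd_of_dvd_mul_left hcop.symm) this
  set w := b / v with hw
  have hbw : v * w = b := Nat.mul_div_cancel' hvb
  have hv0 : 0 < v := by
    rcases Nat.eq_zero_or_pos v with h0 | h0
    · rw [h0] at hcv; omega
    · exact h0
  have hdw : u * w = d := by
    have : v * (u * w) = v * d := by
      calc v * (u * w) = u * (v * w) := by ring
        _ = u * b := by rw [hbw]
        _ = v * d := hub
    exact Nat.eq_of_mul_eq_mul_left hv0 this
  exact ⟨hau, hcv, hbw, hdw⟩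

section
def pairsK (K : ℕ) : Finset (ℕ×ℕ) := Finset.Icc 1 K ×ˢ Finset.Icc 1 K
def Q4 (K : ℕ) : Finset ((ℕ×ℕ)×(ℕ×ℕ)) := pairsK K ×ˢ pairsK K
def S2set (K : ℕ) : Finset (ℕ×ℕ) := (pairsK K).filter (fun p => p.1*p.2 ≤ K)
def φmap (z : (ℕ×ℕ)×(ℕ×ℕ)) : (ℕ×ℕ)×(ℕ×ℕ) :=
  ((Nat.gcd z.1.1 z.2.1, z.1.1 / Nat.gcd z.1.1 z.2.1),
   (z.2.1 / Nat.gcd z.1.1 z.2.1, z.1.2 / (z.2.1 / Nat.gcd z.1.1 z.2.1)))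

lemma mem_pairsK {K : ℕ} {p : ℕ×ℕ} :
    p ∈ pairsK K ↔ (1 ≤ p.1 ∧ p.1 ≤ K) ∧ (1 ≤ p.2 ∧ p.2 ≤ K) := by
  simp [pairsK, Finset.mem_product]

lemma φ_spec {K : ℕ} {z : (ℕ×ℕ)×(ℕ×ℕ)} (hz : z ∈ Q4 K)
    (hdiag : z.1.1 * z.1.2 = z.2.1 * z.2.2) :
    (φmap z).1.1 * (φmap z).1.2 = z.1.1 ∧
    (φmap z).1.1 * (φmap z).2.1 = z.2.1 ∧
    (φmap z).2.1 * (φmap z).2.2 = z.1.2 ∧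
    (φmap z).1.2 * (φmap z).2.2 = z.2.2 := by
  obtain ⟨hx, hy⟩ := Finset.mem_product.mp hz
  obtain ⟨⟨h1, _⟩, ⟨h2, _⟩⟩ := mem_pairsK.mp hx
  obtain ⟨⟨h3, _⟩, ⟨h4, _⟩⟩ := mem_pairsK.mp hy
  exact quad_struct h1 h2 h3 h4 hdiag

lemma φ_mem {K : ℕ} {z : (ℕ×ℕ)×(ℕ×ℕ)} (hz : z ∈ Q4 K)
    (hdiag : z.1.1 * z.1.2 = z.2.1 * z.2.2) :
    φmap z ∈ S2set K ×ˢ S2set K := by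
  obtain ⟨e1, e2, e3, e4⟩ := φ_spec hz hdiag
  obtain ⟨hx, hy⟩ := Finset.mem_product.mp hz
  obtain ⟨⟨h1, h1'⟩, ⟨h2, h2'⟩⟩ := mem_pairsK.mp hx
  obtain ⟨⟨h3, h3'⟩, ⟨h4, h4'⟩⟩ := mem_pairsK.mp hy
  obtain ⟨⟨hga, hgb⟩, ⟨hua, hub⟩⟩ := factor_bounds e1 h1 h1'
  obtain ⟨⟨hva, hvb⟩, ⟨hwa, hwb⟩⟩ := factor_bounds e3 h2 h2'
  rw [Finset.mem_product]
  constructor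
  · rw [S2set, Finset.mem_filter, mem_pairsK]
    exact ⟨⟨⟨hga, hgb⟩, ⟨hua, hub⟩⟩, by rw [e1]; exact h1'⟩
  · rw [S2set, Finset.mem_filter, mem_pairsK]
    exact ⟨⟨⟨hva, hvb⟩, ⟨hwa, hwb⟩⟩, by rw [e3]; exact h2'⟩

lemma φ_injOn (K : ℕ) :
    Set.InjOn φmap ↑((Q4 K).filter (fun z => z.1.1 * z.1.2 = z.2.1 * z.2.2)) := by
  intro z hz z' hz' heq
  simp only [Finset.coe_filter, Set.mem_setOf_eq] at hz hz'
  obtain ⟨e1, e2, e3, e4⟩ := φ_spec hz.1 hz.2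
  obtain ⟨f1, f2, f3, f4⟩ := φ_spec hz'.1 hz'.2
  rw [heq] at e1 e2 e3 e4
  have : z.1.1 = z'.1.1 := by rw [← e1, ← f1]
  have : z.1.2 = z'.1.2 := by rw [← e3, ← f3]
  have : z.2.1 = z'.2.1 := by rw [← e2, ← f2]
  have : z.2.2 = z'.2.2 := by rw [← e4, ← f4]
  ext <;> simp_all

-- diagonal weighted sum
noncomputable def Fw (y : (ℕ×ℕ)×(ℕ×ℕ)) : ℝ := (1/(y.1.1:ℝ)) * (1/(y.1.2:ℝ)) * (1/(y.2.1:ℝ)) * (1/(y.2.2:ℝ))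

lemma Fw_nonneg (y : (ℕ×ℕ)×(ℕ×ℕ)) : 0 ≤ Fw y := by
  unfold Fw; positivity

lemma sum_Fw_Q4 (K : ℕ) : ∑ z ∈ Q4 K, Fw z = (∑ n ∈ Finset.Icc 1 K, (1:ℝ)/n)^4 := by
  have e1 : ∑ p ∈ pairsK K, (1/(p.1:ℝ))*(1/(p.2:ℝ)) = (∑ n ∈ Finset.Icc 1 K, (1:ℝ)/n)^2 := by
    rw [sq, Finset.sum_mul_sum, pairsK, Finset.sum_product]
  have e2 : ∑ z ∈ Q4 K, Fw z = (∑ p ∈ pairsK K, (1/(p.1:ℝ))*(1/(p.2:ℝ)))^2 := by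
    rw [sq, Finset.sum_mul_sum, Q4, Finset.sum_product]
    apply Finset.sum_congr rfl; intro x _
    apply Finset.sum_congr rfl; intro y _
    unfold Fw; ring
  rw [e2, e1]; ring

lemma subset_Q4 (K : ℕ) : S2set K ×ˢ S2set K ⊆ Q4 K := by
  intro z hz
  obtain ⟨h1, h2⟩ := Finset.mem_product.mp hz
  rw [S2set, Finset.mem_filter] at h1 h2
  exact Finset.mem_product.mpr ⟨h1.1, h2.1⟩

lemma diag_sum_le (K : ℕ) :
    ∑ z ∈ (Q4 K).filter (fun z => z.1.1 * z.1.2 = z.2.1 * z.2.2),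
      (1:ℝ)/(z.1.1 * z.1.2 : ℕ)
    ≤ (∑ n ∈ Finset.Icc 1 K, (1:ℝ)/n)^4 := by
  set D := (Q4 K).filter (fun z => z.1.1 * z.1.2 = z.2.1 * z.2.2) with hD
  have key : ∀ z ∈ D, (1:ℝ)/(z.1.1 * z.1.2 : ℕ) = Fw (φmap z) := by
    intro z hz
    rw [hD, Finset.mem_filter] at hz
    obtain ⟨e1, e2, e3, e4⟩ := φ_spec hz.1 hz.2
    have h1 : z.1.1 = (φmap z).1.1 * (φmap z).1.2 := e1.symm
    have h2 : z.1.2 = (φmap z).2.1 * (φmap z).2.2 := e3.symm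
    rw [h1, h2]
    unfold Fw
    push_cast
    ring
  rw [Finset.sum_congr rfl key]
  have hinj : ∀ x ∈ D, ∀ y ∈ D, φmap x = φmap y → x = y := by
    intro x hx y hy h
    exact φ_injOn K (by simpa [hD] using hx) (by simpa [hD] using hy) h
  rw [show (∑ z ∈ D, Fw (φmap z)) = ∑ y ∈ D.image φmap, Fw y from (Finset.sum_image hinj).symm]
  have hsub : D.image φmap ⊆ Q4 K := by
    intro w hw
    obtain ⟨z, hz, rfl⟩ := Finset.mem_image.mp hw
    rw [hD, Finset.mem_filter] at hz
    exact subset_Q4 K (φ_mem hz.1 hz.2)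
  calc ∑ y ∈ D.image φmap, Fw y ≤ ∑ z ∈ Q4 K, Fw z :=
        Finset.sum_le_sum_of_subset_of_nonneg hsub (fun z _ _ => Fw_nonneg z)
    _ = _ := sum_Fw_Q4 K

lemma diag_card_le (K : ℕ) :
    ((Q4 K).filter (fun z => z.1.1 * z.1.2 = z.2.1 * z.2.2)).card ≤ (S2set K).card ^ 2 := by
  calc ((Q4 K).filter (fun z => z.1.1 * z.1.2 = z.2.1 * z.2.2)).card
      ≤ (S2set K ×ˢ S2set K).card :=
        Finset.card_le_card_of_injOn φmap
          (fun z hz => by rw [Finset.mem_coe, Finset.mem_filter] at hz; exact Finset.mem_coe.mpr (φ_mem hz.1 hz.2))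
          (φ_injOn K)
    _ = (S2set K).card ^ 2 := by rw [Finset.card_product, sq]

lemma S2card_le (K : ℕ) :
    ((S2set K).card : ℝ) ≤ K * (Real.log K + 1) := by
  have hcard : (S2set K).card = ∑ g ∈ Finset.Icc 1 K, ((Finset.Icc 1 K).filter (fun u => g*u ≤ K)).card := by
    rw [S2set, pairsK, Finset.card_filter, Finset.sum_product]
    exact Finset.sum_congr rfl (fun g _ => (Finset.card_filter _ _).symm)
  have hfe : ∀ g ∈ Finset.Icc 1 K, ((Finset.Icc 1 K).filter (fun u => g*u ≤ K)).card = K / g := by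
    intro g hg
    obtain ⟨hg1, _⟩ := Finset.mem_Icc.mp hg
    have : (Finset.Icc 1 K).filter (fun u => g*u ≤ K) = Finset.Icc 1 (K/g) := by
      ext u
      simp only [Finset.mem_filter, Finset.mem_Icc]
      constructor
      · rintro ⟨⟨h1, _⟩, h3⟩
        exact ⟨h1, (Nat.le_div_iff_mul_le hg1).mpr (by rwa [mul_comm])⟩
      · rintro ⟨h1, h2⟩
        have h3 := (Nat.le_div_iff_mul_le hg1).mp h2
        refine ⟨⟨h1, ?_⟩, by rwa [mul_comm] at h3⟩
        calc u = u*1 := by ring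
          _ ≤ u*g := Nat.mul_le_mul_left u hg1
          _ ≤ K := h3
    rw [this, Nat.card_Icc, Nat.add_sub_cancel]
  rw [hcard]
  push_cast
  calc ∑ g ∈ Finset.Icc 1 K, (((Finset.Icc 1 K).filter (fun u => g*u ≤ K)).card : ℝ)
      ≤ ∑ g ∈ Finset.Icc 1 K, (K:ℝ)/g := by
        apply Finset.sum_le_sum
        intro g hg
        rw [hfe g hg]
        exact Nat.cast_div_le
    _ = (K:ℝ) * ∑ g ∈ Finset.Icc 1 K, (1:ℝ)/g := by
        rw [Finset.mul_sum]
        exact Finset.sum_congr rfl (fun g _ => by ring)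
    _ ≤ (K:ℝ) * (Real.log K + 1) := by
        apply mul_le_mul_of_nonneg_left (harmonic_le K) (by positivity)
end


noncomputable def w0 (P Q : ℕ) : ℝ := if P = Q then 0 else 1/|(P:ℝ) - (Q:ℝ)|

lemma w0_nonneg (P Q : ℕ) : 0 ≤ w0 P Q := by
  unfold w0; split_ifs; · exact le_refl 0
  · positivity

lemma w0_symm (P Q : ℕ) : w0 P Q = w0 Q P := by
  unfold w0
  rcases eq_or_ne P Q with h | h
  · simp [h]
  · rw [if_neg h, if_neg (Ne.symm h), abs_sub_comm]

lemma half_sum_le (M P : ℕ) (hPM : P ≤ M) (cmp : ℕ → ℕ → Prop) [DecidableRel cmp]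
    (hcmp : ∀ Q, cmp Q P → Q ≠ P)
    (sub : ℕ → ℕ → ℕ) (hsub : ∀ Q ∈ Finset.Icc 1 M, cmp Q P → (sub P Q ≥ 1 ∧ sub P Q ≤ M) ∧ ((sub P Q : ℝ) = |(P:ℝ) - Q|))
    (hinj : ∀ Q Q', cmp Q P → cmp Q' P → sub P Q = sub P Q' → Q = Q') :
    ∑ Q ∈ (Finset.Icc 1 M).filter (fun Q => cmp Q P), 1/|(P:ℝ) - Q| ≤ Real.log M + 1 := by
  have step : ∑ Q ∈ (Finset.Icc 1 M).filter (fun Q => cmp Q P), 1/|(P:ℝ) - Q|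
      = ∑ j ∈ ((Finset.Icc 1 M).filter (fun Q => cmp Q P)).image (sub P), (1:ℝ)/j := by
    rw [Finset.sum_image]
    · apply Finset.sum_congr rfl
      intro Q hQ
      obtain ⟨hm, hc⟩ := Finset.mem_filter.mp hQ
      rw [(hsub Q hm hc).2]
    · intro Q hQ Q' hQ' h
      exact hinj Q Q' (Finset.mem_filter.mp hQ).2 (Finset.mem_filter.mp hQ').2 h
  rw [step]
  calc ∑ j ∈ ((Finset.Icc 1 M).filter (fun Q => cmp Q P)).image (sub P), (1:ℝ)/j
      ≤ ∑ j ∈ Finset.Icc 1 M, (1:ℝ)/j := by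
        apply Finset.sum_le_sum_of_subset_of_nonneg
        · intro j hj
          obtain ⟨Q, hQ, rfl⟩ := Finset.mem_image.mp hj
          obtain ⟨hm, hc⟩ := Finset.mem_filter.mp hQ
          exact Finset.mem_Icc.mpr ⟨(hsub Q hm hc).1.1, (hsub Q hm hc).1.2⟩
        · intro j _ _; positivity
    _ ≤ Real.log M + 1 := harmonic_le M

lemma rowsum_le {M P : ℕ} (hP : P ∈ Finset.Icc 1 M) :
    ∑ Q ∈ Finset.Icc 1 M, w0 P Q ≤ 2*(Real.log M + 1) := by
  obtain ⟨hP1, hPM⟩ := Finset.mem_Icc.mp hP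
  have hpt : ∀ Q ∈ Finset.Icc 1 M, w0 P Q ≤
      (if Q < P then 1/|(P:ℝ)-(Q:ℝ)| else 0) + (if P < Q then 1/|(P:ℝ)-(Q:ℝ)| else 0) := by
    intro Q _
    unfold w0
    rcases lt_trichotomy P Q with h | h | h
    · rw [if_neg h.ne, if_neg (by omega), if_pos h, zero_add]
    · simp [h]
    · rw [if_neg (by omega : ¬ P = Q), if_pos h, if_neg (by omega : ¬ P < Q), add_zero]
  calc ∑ Q ∈ Finset.Icc 1 M, w0 P Q
      ≤ ∑ Q ∈ Finset.Icc 1 M, ((if Q < P then 1/|(P:ℝ)-(Q:ℝ)| else 0)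
          + (if P < Q then 1/|(P:ℝ)-(Q:ℝ)| else 0)) := Finset.sum_le_sum hpt
    _ = (∑ Q ∈ (Finset.Icc 1 M).filter (fun Q => Q < P), 1/|(P:ℝ)-(Q:ℝ)|)
        + (∑ Q ∈ (Finset.Icc 1 M).filter (fun Q => P < Q), 1/|(P:ℝ)-(Q:ℝ)|) := by
        rw [Finset.sum_add_distrib, Finset.sum_filter, Finset.sum_filter]
    _ ≤ (Real.log M + 1) + (Real.log M + 1) := by
        apply add_le_add
        · apply half_sum_le M P hPM (fun Q P => Q < P) (fun Q h => h.ne) (fun P Q => P - Q)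
          · intro Q hm hc
            refine ⟨⟨by omega, by omega⟩, ?_⟩
            have hle : (Q:ℝ) ≤ P := by exact_mod_cast hc.le
            rw [_root_.abs_of_nonneg (by linarith : (0:ℝ) ≤ (P:ℝ) - (Q:ℝ)), Nat.cast_sub hc.le]
          · intro Q Q' h h' he; omega
        · apply half_sum_le M P hPM (fun Q P => P < Q) (fun Q h => (by omega)) (fun P Q => Q - P)
          · intro Q hm hc
            obtain ⟨hm1, hm2⟩ := Finset.mem_Icc.mp hm
            refine ⟨⟨by omega, by omega⟩, ?_⟩
            have hle : (P:ℝ) ≤ Q := by exact_mod_cast hc.le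
            rw [abs_sub_comm, _root_.abs_of_nonneg (by linarith : (0:ℝ) ≤ (Q:ℝ) - (P:ℝ)), Nat.cast_sub hc.le]
          · intro Q Q' h h' he; omega
    _ = 2*(Real.log M + 1) := by ring

noncomputable def nu (K Q : ℕ) : ℕ := ((pairsK K).filter (fun p => p.1*p.2 = Q)).card

lemma pi_maps_to {K : ℕ} : ∀ p ∈ pairsK K, p.1*p.2 ∈ Finset.Icc 1 (K*K) := by
  intro p hp
  obtain ⟨⟨h1, h2⟩, ⟨h3, h4⟩⟩ := mem_pairsK.mp hp
  exact Finset.mem_Icc.mpr ⟨le_trans (by norm_num) (Nat.mul_le_mul h1 h3), Nat.mul_le_mul h2 h4⟩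

lemma inner_group {K : ℕ} (f : ℕ → ℝ) :
    ∑ y ∈ pairsK K, f (y.1*y.2) = ∑ Q ∈ Finset.Icc 1 (K*K), (nu K Q : ℝ) * f Q := by
  rw [← Finset.sum_fiberwise_of_maps_to pi_maps_to (fun y => f (y.1*y.2))]
  apply Finset.sum_congr rfl
  intro Q _
  have : ∀ y ∈ (pairsK K).filter (fun p => p.1*p.2 = Q), f (y.1*y.2) = f Q := by
    intro y hy
    rw [(Finset.mem_filter.mp hy).2]
  rw [Finset.sum_congr rfl this, Finset.sum_const, nu, nsmul_eq_mul]

lemma nu_sq_sum (K : ℕ) :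
    ∑ P ∈ Finset.Icc 1 (K*K), ((nu K P : ℝ))^2
      = (((Q4 K).filter (fun z => z.1.1 * z.1.2 = z.2.1 * z.2.2)).card : ℝ) := by
  have h1 : ∑ P ∈ Finset.Icc 1 (K*K), (nu K P : ℝ)^2
      = ∑ x ∈ pairsK K, (nu K (x.1*x.2) : ℝ) := by
    rw [inner_group (fun Q => (nu K Q : ℝ))]
    apply Finset.sum_congr rfl
    intro Q _; rw [sq]
  rw [h1]
  have h2 : (((Q4 K).filter (fun z => z.1.1 * z.1.2 = z.2.1 * z.2.2)).card : ℕ)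
      = ∑ x ∈ pairsK K, nu K (x.1*x.2) := by
    rw [Finset.card_filter, Q4, Finset.sum_product]
    apply Finset.sum_congr rfl
    intro x _
    rw [nu, Finset.card_filter]
    apply Finset.sum_congr rfl
    intro y _
    by_cases h : x.1*x.2 = y.1*y.2
    · rw [if_pos h, if_pos h.symm]
    · rw [if_neg h, if_neg (fun hh => h hh.symm)]
  rw [h2]
  push_cast
  rfl

lemma S3_bound (K : ℕ) :
    ∑ z ∈ Q4 K, w0 (z.1.1*z.1.2) (z.2.1*z.2.2)
      ≤ (((Q4 K).filter (fun z => z.1.1*z.1.2 = z.2.1*z.2.2)).card : ℝ)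
          * (2*(Real.log (K*K) + 1)) := by
  set M := K*K with hM
  set I := Finset.Icc 1 M with hI
  have expand : ∑ z ∈ Q4 K, w0 (z.1.1*z.1.2) (z.2.1*z.2.2)
      = ∑ P ∈ I, ∑ Q ∈ I, (nu K P : ℝ) * (nu K Q : ℝ) * w0 P Q := by
    rw [Q4, Finset.sum_product]
    have e1 : ∀ x ∈ pairsK K, ∑ y ∈ pairsK K, w0 (x.1*x.2) (y.1*y.2)
        = ∑ Q ∈ I, (nu K Q : ℝ) * w0 (x.1*x.2) Q := fun x _ => inner_group _
    rw [Finset.sum_congr rfl e1]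
    rw [show (∑ x ∈ pairsK K, ∑ Q ∈ I, (nu K Q : ℝ) * w0 (x.1*x.2) Q)
        = ∑ P ∈ I, (nu K P : ℝ) * ∑ Q ∈ I, (nu K Q : ℝ) * w0 P Q from
      inner_group (fun P => ∑ Q ∈ I, (nu K Q : ℝ) * w0 P Q)]
    apply Finset.sum_congr rfl
    intro P _
    rw [Finset.mul_sum]
    apply Finset.sum_congr rfl
    intro Q _
    ring
  rw [expand]
  have amgm : ∀ P ∈ I, ∀ Q ∈ I, (nu K P : ℝ) * (nu K Q : ℝ) * w0 P Q
      ≤ (((nu K P : ℝ)^2 + (nu K Q : ℝ)^2)/2) * w0 P Q := by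
    intro P _ Q _
    apply mul_le_mul_of_nonneg_right _ (w0_nonneg P Q)
    nlinarith [sq_nonneg ((nu K P : ℝ) - (nu K Q : ℝ))]
  have step1 : ∑ P ∈ I, ∑ Q ∈ I, (nu K P : ℝ) * (nu K Q : ℝ) * w0 P Q
      ≤ ∑ P ∈ I, ∑ Q ∈ I, (((nu K P : ℝ)^2 + (nu K Q : ℝ)^2)/2) * w0 P Q :=
    Finset.sum_le_sum (fun P hP => Finset.sum_le_sum (fun Q hQ => amgm P hP Q hQ))
  have split : ∑ P ∈ I, ∑ Q ∈ I, (((nu K P : ℝ)^2 + (nu K Q : ℝ)^2)/2) * w0 P Q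
      = ∑ P ∈ I, (nu K P : ℝ)^2 * ∑ Q ∈ I, w0 P Q := by
    have e : ∀ P Q : ℕ, (((nu K P : ℝ)^2 + (nu K Q : ℝ)^2)/2) * w0 P Q
        = ((nu K P : ℝ)^2 * w0 P Q)/2 + ((nu K Q : ℝ)^2 * w0 P Q)/2 := by
      intro P Q; ring
    calc ∑ P ∈ I, ∑ Q ∈ I, (((nu K P : ℝ)^2 + (nu K Q : ℝ)^2)/2) * w0 P Q
        = ∑ P ∈ I, ∑ Q ∈ I, (((nu K P : ℝ)^2 * w0 P Q)/2 + ((nu K Q : ℝ)^2 * w0 P Q)/2) := by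
          apply Finset.sum_congr rfl; intro P _
          apply Finset.sum_congr rfl; intro Q _
          exact e P Q
      _ = (∑ P ∈ I, ∑ Q ∈ I, ((nu K P : ℝ)^2 * w0 P Q)/2)
          + (∑ P ∈ I, ∑ Q ∈ I, ((nu K Q : ℝ)^2 * w0 P Q)/2) := by
          rw [← Finset.sum_add_distrib]
          apply Finset.sum_congr rfl; intro P _
          rw [← Finset.sum_add_distrib]
      _ = (∑ P ∈ I, ∑ Q ∈ I, ((nu K P : ℝ)^2 * w0 P Q)/2)
          + (∑ P ∈ I, ∑ Q ∈ I, ((nu K P : ℝ)^2 * w0 P Q)/2) := by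
          congr 1
          rw [Finset.sum_comm]
          apply Finset.sum_congr rfl; intro P _
          apply Finset.sum_congr rfl; intro Q _
          rw [w0_symm]
      _ = ∑ P ∈ I, (nu K P : ℝ)^2 * ∑ Q ∈ I, w0 P Q := by
          rw [← Finset.sum_add_distrib]
          apply Finset.sum_congr rfl; intro P _
          rw [← Finset.sum_add_distrib, Finset.mul_sum]
          apply Finset.sum_congr rfl; intro Q _
          ring
  have final : ∑ P ∈ I, (nu K P : ℝ)^2 * ∑ Q ∈ I, w0 P Q
      ≤ ∑ P ∈ I, (nu K P : ℝ)^2 * (2*(Real.log M + 1)) := by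
    apply Finset.sum_le_sum
    intro P hP
    exact mul_le_mul_of_nonneg_left (rowsum_le hP) (by positivity)
  calc ∑ P ∈ I, ∑ Q ∈ I, (nu K P : ℝ) * (nu K Q : ℝ) * w0 P Q
      ≤ ∑ P ∈ I, (nu K P : ℝ)^2 * ∑ Q ∈ I, w0 P Q := step1.trans_eq split
    _ ≤ ∑ P ∈ I, (nu K P : ℝ)^2 * (2*(Real.log M + 1)) := final
    _ = (∑ P ∈ I, (nu K P : ℝ)^2) * (2*(Real.log M + 1)) := by rw [Finset.sum_mul]
    _ = _ := by rw [nu_sq_sum K]; simp only [hM]; push_cast; ring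


lemma eFun_norm (x : ℝ) : ‖eFun x‖ = 1 := by
  unfold eFun
  rw [Complex.norm_exp]
  have : (2 * (π:ℂ) * Complex.I * (x:ℂ)).re = 0 := by simp
  rw [this, Real.exp_zero]

lemma cpow_fact {n : ℕ} (hn : 1 ≤ n) (t : ℝ) :
    (n:ℂ) ^ (-(1/2 : ℂ) + Complex.I * t)
      = (((n:ℝ) ^ (-(1/2) : ℝ) : ℝ) : ℂ) * Complex.exp (Complex.I * (Real.log n) * t) := by
  have hpos : (0:ℝ) < n := by exact_mod_cast hn
  have h1 : ((n:ℂ)) ≠ 0 := by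
    simp only [ne_eq, Nat.cast_eq_zero]; omega
  rw [Complex.cpow_def_of_ne_zero h1]
  have hlog : Complex.log (n:ℂ) = ((Real.log n : ℝ) : ℂ) := by
    rw [show ((n:ℂ)) = (((n:ℝ)):ℂ) from (Complex.ofReal_natCast n).symm,
      ← Complex.ofReal_log hpos.le]
  rw [hlog]
  rw [show ((Real.log n : ℝ):ℂ) * (-(1/2:ℂ) + Complex.I*t)
      = ((-(Real.log n * (1/2)) : ℝ) : ℂ) + Complex.I * (Real.log n) * t by push_cast; ring]
  rw [Complex.exp_add]
  congr 1
  rw [← Complex.ofReal_exp]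
  norm_cast
  rw [Real.rpow_def_of_pos hpos]
  congr 1; ring

noncomputable def bfun (y : ℝ) (n : ℕ) (t : ℝ) : ℂ :=
  if 2*π*(n:ℝ)^2 ≤ t then eFun (-(n:ℝ)*y) * (n:ℂ) ^ (-(1/2 : ℂ) + Complex.I * t) else 0

noncomputable def Ffun (y : ℝ) (z : (ℕ×ℕ)×(ℕ×ℕ)) (t : ℝ) : ℂ :=
  bfun y z.1.1 t * bfun y z.1.2 t
    * (starRingEnd ℂ) (bfun y z.2.1 t) * (starRingEnd ℂ) (bfun y z.2.2 t)

def maxn (z : (ℕ×ℕ)×(ℕ×ℕ)) : ℕ := max (max z.1.1 z.1.2) (max z.2.1 z.2.2)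

noncomputable def θz (z : (ℕ×ℕ)×(ℕ×ℕ)) : ℝ :=
  Real.log z.1.1 + Real.log z.1.2 - Real.log z.2.1 - Real.log z.2.2

noncomputable def ρz (z : (ℕ×ℕ)×(ℕ×ℕ)) : ℝ :=
  (z.1.1:ℝ)^(-(1/2):ℝ) * (z.1.2:ℝ)^(-(1/2):ℝ) * (z.2.1:ℝ)^(-(1/2):ℝ) * (z.2.2:ℝ)^(-(1/2):ℝ)

lemma ρz_nonneg (z : (ℕ×ℕ)×(ℕ×ℕ)) : 0 ≤ ρz z := by
  unfold ρz; positivity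

noncomputable def cz (y : ℝ) (z : (ℕ×ℕ)×(ℕ×ℕ)) : ℂ :=
  eFun (-(z.1.1:ℝ)*y) * eFun (-(z.1.2:ℝ)*y)
    * (starRingEnd ℂ) (eFun (-(z.2.1:ℝ)*y)) * (starRingEnd ℂ) (eFun (-(z.2.2:ℝ)*y)) * ((ρz z : ℝ) : ℂ)

lemma cz_norm (y : ℝ) (z : (ℕ×ℕ)×(ℕ×ℕ)) : ‖cz y z‖ = ρz z := by
  unfold cz
  rw [norm_mul, norm_mul, norm_mul, norm_mul, eFun_norm, eFun_norm,
    RCLike.norm_conj, RCLike.norm_conj, eFun_norm, eFun_norm, Complex.norm_real,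
    Real.norm_of_nonneg (ρz_nonneg z)]
  ring

lemma F_eq (y : ℝ) (z : (ℕ×ℕ)×(ℕ×ℕ)) (h1 : 1 ≤ z.1.1) (h2 : 1 ≤ z.1.2)
    (h3 : 1 ≤ z.2.1) (h4 : 1 ≤ z.2.2) (t : ℝ) :
    Ffun y z t = if 2*π*((maxn z : ℕ):ℝ)^2 ≤ t
      then cz y z * Complex.exp (Complex.I * ((θz z : ℝ):ℂ) * (t:ℂ)) else 0 := by
  by_cases h : 2*π*((maxn z : ℕ):ℝ)^2 ≤ t
  · rw [if_pos h]
    have hcond : ∀ n : ℕ, n ≤ maxn z → 2*π*(n:ℝ)^2 ≤ t := by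
      intro n hn
      refine le_trans ?_ h
      have : (n:ℝ) ≤ ((maxn z : ℕ):ℝ) := by exact_mod_cast hn
      have h2 : (n:ℝ)^2 ≤ ((maxn z : ℕ):ℝ)^2 := by
        apply pow_le_pow_left₀ (by positivity) this
      nlinarith [Real.pi_pos]
    have e1 : bfun y z.1.1 t = eFun (-(z.1.1:ℝ)*y) * (z.1.1:ℂ) ^ (-(1/2 : ℂ) + Complex.I * t) :=
      if_pos (hcond _ (le_trans (le_max_left _ _) (le_max_left _ _)))
    have e2 : bfun y z.1.2 t = eFun (-(z.1.2:ℝ)*y) * (z.1.2:ℂ) ^ (-(1/2 : ℂ) + Complex.I * t) :=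
      if_pos (hcond _ (le_trans (le_max_right _ _) (le_max_left _ _)))
    have e3 : bfun y z.2.1 t = eFun (-(z.2.1:ℝ)*y) * (z.2.1:ℂ) ^ (-(1/2 : ℂ) + Complex.I * t) :=
      if_pos (hcond _ (le_trans (le_max_left _ _) (le_max_right _ _)))
    have e4 : bfun y z.2.2 t = eFun (-(z.2.2:ℝ)*y) * (z.2.2:ℂ) ^ (-(1/2 : ℂ) + Complex.I * t) :=
      if_pos (hcond _ (le_trans (le_max_right _ _) (le_max_right _ _)))
    rw [Ffun, e1, e2, e3, e4, cpow_fact h1, cpow_fact h2, cpow_fact h3, cpow_fact h4]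
    simp only [map_mul, ← Complex.exp_conj, map_mul, Complex.conj_I, Complex.conj_ofReal]
    rw [show Complex.I * ((θz z : ℝ):ℂ) * (t:ℂ)
        = (Complex.I * ((Real.log z.1.1 : ℝ):ℂ) * t) + (Complex.I * ((Real.log z.1.2 : ℝ):ℂ) * t)
          + ((-Complex.I) * ((Real.log z.2.1 : ℝ):ℂ) * t) + ((-Complex.I) * ((Real.log z.2.2 : ℝ):ℂ) * t) by
      unfold θz; push_cast; ring]
    rw [Complex.exp_add, Complex.exp_add, Complex.exp_add]
    unfold cz ρz
    push_cast
    ring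
  · rw [if_neg h]
    have hmx : maxn z = z.1.1 ∨ maxn z = z.1.2 ∨ maxn z = z.2.1 ∨ maxn z = z.2.2 := by
      unfold maxn; omega
    have hz0 : ∀ n : ℕ, n = maxn z → bfun y n t = 0 := by
      intro n hn
      rw [bfun, if_neg]
      rw [hn]
      exact h
    rcases hmx with hc | hc | hc | hc
    · rw [Ffun, hz0 z.1.1 hc.symm]; ring
    · rw [Ffun, hz0 z.1.2 hc.symm]; ring
    · rw [Ffun, hz0 z.2.1 hc.symm, map_zero]; ring
    · rw [Ffun, hz0 z.2.2 hc.symm, map_zero]; ring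

lemma sum_eq (V y : ℝ) (hV : 2*π < V) (t : ℝ) (ht : t ∈ Set.Ioc (2*π) V) :
    (∑ n ∈ Finset.Icc 1 ⌊Real.sqrt (t/(2*π))⌋₊,
        eFun (-(n:ℝ)*y) * (n:ℂ) ^ (-(1/2 : ℂ) + Complex.I * t))
      = ∑ n ∈ Finset.Icc 1 ⌊Real.sqrt (V/(2*π))⌋₊, bfun y n t := by
  obtain ⟨ht1, ht2⟩ := ht
  have hπ : (0:ℝ) < 2*π := by positivity
  have ht0 : (0:ℝ) < t := lt_trans hπ ht1
  have hfe : (Finset.Icc 1 ⌊Real.sqrt (V/(2*π))⌋₊).filter (fun n : ℕ => 2*π*(n:ℝ)^2 ≤ t)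
      = Finset.Icc 1 ⌊Real.sqrt (t/(2*π))⌋₊ := by
    ext n
    simp only [Finset.mem_filter, Finset.mem_Icc]
    constructor
    · rintro ⟨⟨hn1, _⟩, hc⟩
      refine ⟨hn1, Nat.le_floor ?_⟩
      rw [Real.le_sqrt (by positivity) (by positivity)]
      rw [le_div_iff₀ hπ]
      linarith [hc]
    · rintro ⟨hn1, hn2⟩
      have hcast : (n:ℝ) ≤ Real.sqrt (t/(2*π)) :=
        le_trans (by exact_mod_cast hn2) (Nat.floor_le (Real.sqrt_nonneg _))
      have hsq : (n:ℝ)^2 ≤ t/(2*π) := by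
        calc (n:ℝ)^2 ≤ Real.sqrt (t/(2*π))^2 := pow_le_pow_left₀ (by positivity) hcast 2
          _ = t/(2*π) := Real.sq_sqrt (by positivity)
      refine ⟨⟨hn1, le_trans hn2 (Nat.floor_le_floor (Real.sqrt_le_sqrt (by gcongr)))⟩, ?_⟩
      rw [le_div_iff₀' hπ] at hsq
      linarith [hsq]
  calc (∑ n ∈ Finset.Icc 1 ⌊Real.sqrt (t/(2*π))⌋₊,
        eFun (-(n:ℝ)*y) * (n:ℂ) ^ (-(1/2 : ℂ) + Complex.I * t))
      = ∑ n ∈ (Finset.Icc 1 ⌊Real.sqrt (V/(2*π))⌋₊).filter (fun n : ℕ => 2*π*(n:ℝ)^2 ≤ t),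
          eFun (-(n:ℝ)*y) * (n:ℂ) ^ (-(1/2 : ℂ) + Complex.I * t) := by rw [hfe]
    _ = ∑ n ∈ Finset.Icc 1 ⌊Real.sqrt (V/(2*π))⌋₊, bfun y n t := by
        rw [Finset.sum_filter]
        rfl

lemma norm4_eq (y : ℝ) (K : ℕ) (t : ℝ) :
    ‖∑ n ∈ Finset.Icc 1 K, bfun y n t‖^4 = (∑ z ∈ Q4 K, Ffun y z t).re := by
  set S := ∑ n ∈ Finset.Icc 1 K, bfun y n t with hS
  have h1 : S * S = ∑ x ∈ pairsK K, bfun y x.1 t * bfun y x.2 t := by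
    rw [pairsK, Finset.sum_product, hS, Finset.sum_mul_sum]
  have h2 : (starRingEnd ℂ) S * (starRingEnd ℂ) S
      = ∑ x ∈ pairsK K, (starRingEnd ℂ) (bfun y x.1 t) * (starRingEnd ℂ) (bfun y x.2 t) := by
    rw [hS, map_sum, pairsK, Finset.sum_product, Finset.sum_mul_sum]
  have hexp : ∑ z ∈ Q4 K, Ffun y z t = (S * S) * ((starRingEnd ℂ) S * (starRingEnd ℂ) S) := by
    rw [h1, h2, Finset.sum_mul_sum, Q4, Finset.sum_product]
    apply Finset.sum_congr rfl; intro x _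
    apply Finset.sum_congr rfl; intro w _
    rw [Ffun]; ring
  rw [hexp]
  have : (S * S) * ((starRingEnd ℂ) S * (starRingEnd ℂ) S) = (S * (starRingEnd ℂ) S)^2 := by ring
  rw [this, Complex.mul_conj]
  rw [show ((Complex.normSq S : ℝ):ℂ)^2 = (((Complex.normSq S)^2 : ℝ):ℂ) by push_cast; ring]
  rw [Complex.ofReal_re, Complex.normSq_eq_norm_sq]
  ring

lemma F_integrable (y V : ℝ) (z : (ℕ×ℕ)×(ℕ×ℕ)) (h1 : 1 ≤ z.1.1) (h2 : 1 ≤ z.1.2)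
    (h3 : 1 ≤ z.2.1) (h4 : 1 ≤ z.2.2) :
    IntegrableOn (Ffun y z) (Set.Ioc (2*π) V) volume := by
  have heq : Ffun y z = Set.indicator (Set.Ici (2*π*((maxn z : ℕ):ℝ)^2))
      (fun t : ℝ => cz y z * Complex.exp (Complex.I * ((θz z : ℝ):ℂ) * (t:ℂ))) := by
    funext t
    rw [F_eq y z h1 h2 h3 h4 t, Set.indicator_apply]
    congr 1
  rw [heq]
  apply MeasureTheory.Integrable.indicator _ measurableSet_Ici
  apply Continuous.integrableOn_Ioc
  exact continuous_const.mul (Complex.continuous_exp.comp (continuous_const.mul Complex.continuous_ofReal))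



lemma rpow_half_inv {x : ℝ} (hx : 0 ≤ x) : x^(-(1/2):ℝ) = 1/Real.sqrt x := by
  rw [Real.rpow_neg hx, Real.sqrt_eq_rpow, one_div]
  norm_num

lemma ρz_eq (z : (ℕ×ℕ)×(ℕ×ℕ)) :
    ρz z = 1/(Real.sqrt ((z.1.1*z.1.2 : ℕ):ℝ) * Real.sqrt ((z.2.1*z.2.2 : ℕ):ℝ)) := by
  unfold ρz
  rw [rpow_half_inv (by positivity), rpow_half_inv (by positivity),
    rpow_half_inv (by positivity), rpow_half_inv (by positivity)]
  push_cast
  rw [Real.sqrt_mul (by positivity), Real.sqrt_mul (by positivity)]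
  rw [one_div, one_div, one_div, one_div, one_div]
  rw [mul_inv, mul_inv, mul_inv]
  ring

lemma θz_eq (z : (ℕ×ℕ)×(ℕ×ℕ)) (h1 : 1 ≤ z.1.1) (h2 : 1 ≤ z.1.2)
    (h3 : 1 ≤ z.2.1) (h4 : 1 ≤ z.2.2) :
    θz z = Real.log ((z.1.1*z.1.2 : ℕ):ℝ) - Real.log ((z.2.1*z.2.2 : ℕ):ℝ) := by
  unfold θz
  push_cast
  rw [Real.log_mul (by positivity) (by positivity), Real.log_mul (by positivity) (by positivity)]
  ring

lemma exp_norm_one (θ r : ℝ) : ‖Complex.exp (Complex.I * (θ:ℂ) * (r:ℂ))‖ = 1 := by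
  rw [Complex.norm_exp]
  have : (Complex.I * (θ:ℂ) * (r:ℂ)).re = 0 := by simp
  rw [this, Real.exp_zero]

set_option maxHeartbeats 1000000 in
lemma J_bound (V y : ℝ) (hV : 2*π < V) (z : (ℕ×ℕ)×(ℕ×ℕ)) (h1 : 1 ≤ z.1.1) (h2 : 1 ≤ z.1.2)
    (h3 : 1 ≤ z.2.1) (h4 : 1 ≤ z.2.2) :
    ‖∫ t in Set.Ioc (2*π) V, Ffun y z t‖ ≤
      (if z.1.1*z.1.2 = z.2.1*z.2.2 then V * (1/((z.1.1*z.1.2 : ℕ):ℝ)) else 0)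
      + 4 * ρz z + 3 * w0 (z.1.1*z.1.2) (z.2.1*z.2.2) := by
  have hπ : (0:ℝ) < 2*π := by positivity
  set P := z.1.1*z.1.2 with hP
  set Q := z.2.1*z.2.2 with hQ
  have hP1 : 1 ≤ P := le_trans (by norm_num) (Nat.mul_le_mul h1 h2)
  have hQ1 : 1 ≤ Q := le_trans (by norm_num) (Nat.mul_le_mul h3 h4)
  set T := 2*π*((maxn z : ℕ):ℝ)^2 with hT
  have hFeq : ∀ t : ℝ, Ffun y z t
      = if T ≤ t then cz y z * Complex.exp (Complex.I * ((θz z : ℝ):ℂ) * (t:ℂ)) else 0 :=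
    F_eq y z h1 h2 h3 h4
  by_cases hdiag : P = Q
  · -- diagonal
    rw [if_pos hdiag]
    have hθ0 : θz z = 0 := by
      rw [θz_eq z h1 h2 h3 h4, ← hP, ← hQ, hdiag, sub_self]
    have hbd : ∀ t ∈ Set.Ioc (2*π) V, ‖Ffun y z t‖ ≤ ρz z := by
      intro t _
      rw [hFeq t]
      split_ifs
      · rw [norm_mul, hθ0]
        simp only [Complex.ofReal_zero, mul_zero, zero_mul, Complex.exp_zero, norm_one]
        rw [cz_norm, mul_one]
      · simp [ρz_nonneg z]
    have hmeas : volume (Set.Ioc (2*π) V) < ⊤ := by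
      rw [Real.volume_Ioc]; exact ENNReal.ofReal_lt_top
    have := MeasureTheory.norm_setIntegral_le_of_norm_le_const hmeas hbd
    refine le_trans this ?_
    have hvol : volume.real (Set.Ioc (2*π) V) = V - 2*π := by
      rw [measureReal_def, Real.volume_Ioc, ENNReal.toReal_ofReal (by linarith)]
    rw [hvol]
    have hρP : ρz z = 1/((P:ℕ):ℝ) := by
      have hPpos : (0:ℝ) ≤ ((P:ℕ):ℝ) := by positivity
      rw [ρz_eq z, ← hP, ← hQ, ← hdiag, Real.mul_self_sqrt hPpos]
    have h0 : 0 ≤ 4 * ρz z := by linarith [ρz_nonneg z]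
    have h0' : 0 ≤ 3 * w0 P Q := by
      have := w0_nonneg P Q
      linarith
    calc ρz z * (V - 2*π) ≤ ρz z * V := by
          apply mul_le_mul_of_nonneg_left (by linarith) (ρz_nonneg z)
      _ = V * (1/((P:ℕ):ℝ)) := by rw [hρP]; ring
      _ ≤ V * (1/((P:ℕ):ℝ)) + 4 * ρz z + 3 * w0 P Q := by linarith
  · -- off-diagonal
    rw [if_neg hdiag]
    have hPr : (0:ℝ) < ((P:ℕ):ℝ) := by exact_mod_cast hP1
    have hQr : (0:ℝ) < ((Q:ℕ):ℝ) := by exact_mod_cast hQ1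
    have hPQr : ((P:ℕ):ℝ) ≠ ((Q:ℕ):ℝ) := by exact_mod_cast hdiag
    have hθeq : θz z = Real.log ((P:ℕ):ℝ) - Real.log ((Q:ℕ):ℝ) := by
      rw [θz_eq z h1 h2 h3 h4, ← hP, ← hQ]
    have hθne : θz z ≠ 0 := by
      rw [hθeq]
      intro hcontra
      have hlogeq : Real.log ((P:ℕ):ℝ) = Real.log ((Q:ℕ):ℝ) := by linarith [sub_eq_zero.mp hcontra]
      exact hPQr (Real.log_injOn_pos (Set.mem_Ioi.mpr hPr) (Set.mem_Ioi.mpr hQr) hlogeq)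
    have hfuneq : (fun t : ℝ => Ffun y z t) = fun t : ℝ =>
        cz y z * (Set.indicator (Set.Ici T)
          (fun t : ℝ => Complex.exp (Complex.I * ((θz z:ℝ):ℂ) * (t:ℂ))) t) := by
      funext t
      rw [hFeq t, Set.indicator_apply]
      by_cases h : T ≤ t
      · rw [if_pos h, if_pos (Set.mem_Ici.mpr h)]
      · rw [if_neg h, if_neg (fun hh => h (Set.mem_Ici.mp hh)), mul_zero]
    have hJ : (∫ t in Set.Ioc (2*π) V, Ffun y z t)
        = cz y z * ∫ t in Set.Ioc (2*π) V, Set.indicator (Set.Ici T)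
            (fun t : ℝ => Complex.exp (Complex.I * ((θz z:ℝ):ℂ) * (t:ℂ))) t := by
      rw [show (fun t : ℝ => Ffun y z t) = _ from hfuneq]
      exact MeasureTheory.integral_const_mul _ _
    set a' := max (2*π) (min T V) with ha'
    have ha'2 : a' ≤ V := max_le hV.le (min_le_right _ _)
    have hsetae : ((Set.Ioc (2*π) V ∩ Set.Ici T : Set ℝ)) =ᵐ[volume] (Set.Ioc a' V : Set ℝ) := by
      rw [MeasureTheory.ae_eq_set]
      constructor
      · refine measure_mono_null ?_ (Real.volume_singleton (a := T))
        intro x hx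
        simp only [Set.mem_diff, Set.mem_inter_iff, Set.mem_Ioc, Set.mem_Ici,
          Set.mem_singleton_iff] at hx ⊢
        obtain ⟨⟨⟨hx1, hx2⟩, hx3⟩, hx4⟩ := hx
        have hxa : x ≤ a' := by
          by_contra hc
          push_neg at hc
          exact hx4 ⟨hc, hx2⟩
        rw [ha'] at hxa
        rcases le_max_iff.mp hxa with h | h
        · linarith
        · exact le_antisymm (le_trans h (min_le_left T V)) hx3
      · have hempty : Set.Ioc a' V \ (Set.Ioc (2*π) V ∩ Set.Ici T) = ∅ := by
          rw [Set.diff_eq_empty]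
          intro x hx
          obtain ⟨hxa, hxV⟩ := hx
          have hx2π : 2*π < x := lt_of_le_of_lt (le_max_left _ _) hxa
          refine ⟨⟨hx2π, hxV⟩, ?_⟩
          rcases le_total T V with hTV | hTV
          · have : T ≤ a' := le_trans (le_of_eq (min_eq_left hTV).symm) (le_max_right _ _)
            exact Set.mem_Ici.mpr (le_trans this hxa.le)
          · exfalso
            have : a' = V := by
              rw [ha', min_eq_right hTV, max_eq_right hV.le]
            rw [this] at hxa
            linarith
        rw [hempty]
        simp
    have hc : Complex.I * ((θz z:ℝ):ℂ) ≠ 0 :=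
      mul_ne_zero Complex.I_ne_zero (by exact_mod_cast hθne)
    have hint2 : (∫ t in Set.Ioc (2*π) V, Set.indicator (Set.Ici T)
            (fun t : ℝ => Complex.exp (Complex.I * ((θz z:ℝ):ℂ) * (t:ℂ))) t)
        = (Complex.exp (Complex.I * ((θz z:ℝ):ℂ) * (V:ℂ))
            - Complex.exp (Complex.I * ((θz z:ℝ):ℂ) * (a':ℂ)))/(Complex.I * ((θz z:ℝ):ℂ)) := by
      rw [MeasureTheory.setIntegral_indicator measurableSet_Ici,
        MeasureTheory.setIntegral_congr_set hsetae,
        ← intervalIntegral.integral_of_le ha'2]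
      exact integral_exp_mul_complex hc
    have hnormbd : ‖∫ t in Set.Ioc (2*π) V, Ffun y z t‖ ≤ ρz z * (2/|θz z|) := by
      rw [hJ, hint2, norm_mul, cz_norm]
      apply mul_le_mul_of_nonneg_left _ (ρz_nonneg z)
      rw [norm_div]
      have hnum : ‖Complex.exp (Complex.I * ((θz z:ℝ):ℂ) * (V:ℂ))
          - Complex.exp (Complex.I * ((θz z:ℝ):ℂ) * (a':ℂ))‖ ≤ 2 := by
        calc ‖_ - _‖ ≤ ‖Complex.exp (Complex.I * ((θz z:ℝ):ℂ) * (V:ℂ))‖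
              + ‖Complex.exp (Complex.I * ((θz z:ℝ):ℂ) * (a':ℂ))‖ := norm_sub_le _ _
          _ = 2 := by rw [exp_norm_one, exp_norm_one]; norm_num
      have hden : ‖Complex.I * ((θz z:ℝ):ℂ)‖ = |θz z| := by
        rw [norm_mul, Complex.norm_I, Complex.norm_real,
          Real.norm_eq_abs, one_mul]
      rw [hden]
      exact (div_le_div_iff_of_pos_right (abs_pos.mpr hθne)).mpr hnum
    refine le_trans hnormbd ?_
    have hw0 : w0 P Q = 1/|((P:ℕ):ℝ) - ((Q:ℕ):ℝ)| := by rw [w0, if_neg hdiag]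
    have hkey := key_pointwise hP1 hQ1 hdiag
    rw [ρz_eq z, ← hP, ← hQ, hθeq, hw0]
    calc 1/(Real.sqrt ((P:ℕ):ℝ) * Real.sqrt ((Q:ℕ):ℝ))
          * (2/|Real.log ((P:ℕ):ℝ) - Real.log ((Q:ℕ):ℝ)|)
        ≤ 4/(Real.sqrt ((P:ℕ):ℝ) * Real.sqrt ((Q:ℕ):ℝ)) + 3/|((P:ℕ):ℝ) - ((Q:ℕ):ℝ)| := hkey
      _ = 0 + 4 * (1/(Real.sqrt ((P:ℕ):ℝ) * Real.sqrt ((Q:ℕ):ℝ)))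
          + 3 * (1/|((P:ℕ):ℝ) - ((Q:ℕ):ℝ)|) := by ring

lemma sum_ρz_Q4 (K : ℕ) :
    ∑ z ∈ Q4 K, ρz z = (∑ n ∈ Finset.Icc 1 K, (n:ℝ)^(-(1/2):ℝ))^4 := by
  have e1 : ∑ p ∈ pairsK K, (p.1:ℝ)^(-(1/2):ℝ)*(p.2:ℝ)^(-(1/2):ℝ)
      = (∑ n ∈ Finset.Icc 1 K, (n:ℝ)^(-(1/2):ℝ))^2 := by
    rw [sq, Finset.sum_mul_sum, pairsK, Finset.sum_product]
  have e2 : ∑ z ∈ Q4 K, ρz z = (∑ p ∈ pairsK K, (p.1:ℝ)^(-(1/2):ℝ)*(p.2:ℝ)^(-(1/2):ℝ))^2 := by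
    rw [sq, Finset.sum_mul_sum, Q4, Finset.sum_product]
    apply Finset.sum_congr rfl; intro x _
    apply Finset.sum_congr rfl; intro w _
    unfold ρz; ring
  rw [e2, e1]; ring

set_option maxHeartbeats 4000000 in
theorem fourth_moment_twisted_variable_length :
    ∃ C : ℝ, 0 < C ∧ ∀ (V y : ℝ), 2 * π < V → 0 ≤ y → y < 1 →
      ∫ t in (2 * π)..V,
          ‖∑ n ∈ Finset.Icc 1 ⌊Real.sqrt (t / (2 * π))⌋₊,
            eFun (-(n : ℝ) * y) * (n : ℂ) ^ (-(1 / 2 : ℂ) + Complex.I * t)‖ ^ 4 ≤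
        C * V * (Real.log V) ^ 10 := by
  refine ⟨100, by norm_num, ?_⟩
  intro V y hV hy0 hy1
  have hπ : (0:ℝ) < 2*π := by positivity
  have hV0 : (0:ℝ) < V := lt_trans hπ hV
  have hsix : (6:ℝ) < 2*π := by nlinarith [Real.pi_gt_three]
  set K := ⌊Real.sqrt (V/(2*π))⌋₊ with hK
  set L := Real.log V with hL
  have hVK : (K:ℝ) ≤ Real.sqrt (V/(2*π)) := Nat.floor_le (Real.sqrt_nonneg _)
  have hK1 : 1 ≤ K := by
    apply Nat.le_floor
    rw [show ((1:ℕ):ℝ) = Real.sqrt 1 by rw [Real.sqrt_one]; norm_num]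
    apply Real.sqrt_le_sqrt
    rw [le_div_iff₀ hπ]
    linarith
  have hK1r : (1:ℝ) ≤ (K:ℝ) := by exact_mod_cast hK1
  have hK2 : (K:ℝ)^2 ≤ V/(2*π) := by
    calc (K:ℝ)^2 ≤ Real.sqrt (V/(2*π))^2 := pow_le_pow_left₀ (by positivity) hVK 2
      _ = V/(2*π) := Real.sq_sqrt (by positivity)
  have hK2' : (K:ℝ)^2 ≤ V/6 := by
    refine le_trans hK2 ?_
    rw [div_le_div_iff₀ hπ (by norm_num)]
    nlinarith
  have hLe : 1 ≤ L := by
    rw [hL, Real.le_log_iff_exp_le hV0]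
    calc Real.exp 1 ≤ 2.7182818286 := le_of_lt Real.exp_one_lt_d9
      _ ≤ V := by nlinarith [Real.pi_gt_three]
  have hlogK : Real.log K ≤ L/2 := by
    have h1 : Real.log K ≤ Real.log (Real.sqrt (V/(2*π))) :=
      Real.log_le_log (by positivity) hVK
    have h2 : Real.log (Real.sqrt (V/(2*π))) = Real.log (V/(2*π))/2 :=
      Real.log_sqrt (by positivity)
    have h3 : V/(2*π) ≤ V := by
      rw [div_le_iff₀ hπ]; nlinarith
    have h4 : Real.log (V/(2*π)) ≤ L := Real.log_le_log (by positivity) h3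
    linarith
  have hlogK0 : 0 ≤ Real.log K := Real.log_nonneg hK1r
  have hA : Real.log K + 1 ≤ 2*L := by linarith
  have hA0 : (0:ℝ) ≤ Real.log K + 1 := by linarith
  -- step 1-2 : rewrite as set integral of the quadruple expansion
  rw [intervalIntegral.integral_of_le (le_of_lt hV)]
  have step2 : (∫ t in Set.Ioc (2*π) V, ‖∑ n ∈ Finset.Icc 1 ⌊Real.sqrt (t/(2*π))⌋₊,
        eFun (-(n:ℝ)*y) * (n:ℂ)^(-(1/2:ℂ)+Complex.I*t)‖^4)
      = ∫ t in Set.Ioc (2*π) V, ∑ z ∈ Q4 K, (Ffun y z t).re := by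
    apply MeasureTheory.setIntegral_congr_fun measurableSet_Ioc
    intro t ht
    dsimp only
    rw [sum_eq V y hV t ht, ← hK, norm4_eq y K t, Complex.re_sum]
  rw [step2]
  have hmem4 : ∀ z ∈ Q4 K, 1 ≤ z.1.1 ∧ 1 ≤ z.1.2 ∧ 1 ≤ z.2.1 ∧ 1 ≤ z.2.2 := by
    intro z hz
    obtain ⟨hx, hy⟩ := Finset.mem_product.mp hz
    obtain ⟨⟨a1, _⟩, ⟨a2, _⟩⟩ := mem_pairsK.mp hx
    obtain ⟨⟨a3, _⟩, ⟨a4, _⟩⟩ := mem_pairsK.mp hy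
    exact ⟨a1, a2, a3, a4⟩
  have hInt : ∀ z ∈ Q4 K, IntegrableOn (fun t => (Ffun y z t).re) (Set.Ioc (2*π) V) volume := by
    intro z hz
    obtain ⟨h1, h2, h3, h4⟩ := hmem4 z hz
    exact (F_integrable y V z h1 h2 h3 h4).re
  rw [MeasureTheory.integral_finset_sum (Q4 K) hInt]
  have hzbound : ∀ z ∈ Q4 K, (∫ t in Set.Ioc (2*π) V, (Ffun y z t).re)
      ≤ (if z.1.1*z.1.2 = z.2.1*z.2.2 then V * (1/((z.1.1*z.1.2 : ℕ):ℝ)) else 0)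
        + 4 * ρz z + 3 * w0 (z.1.1*z.1.2) (z.2.1*z.2.2) := by
    intro z hz
    obtain ⟨h1, h2, h3, h4⟩ := hmem4 z hz
    have e : (∫ t in Set.Ioc (2*π) V, (Ffun y z t).re)
        = (∫ t in Set.Ioc (2*π) V, Ffun y z t).re := by
      have h := integral_re (F_integrable y V z h1 h2 h3 h4)
      simpa [RCLike.re_to_complex] using h
    rw [e]
    refine le_trans (Complex.re_le_norm _) ?_
    refine le_trans le_rfl ?_
    exact J_bound V y hV z h1 h2 h3 h4
  refine le_trans (Finset.sum_le_sum hzbound) ?_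
  -- split the sum of bounds
  rw [Finset.sum_add_distrib, Finset.sum_add_distrib]
  have hsplit1 : (∑ z ∈ Q4 K, if z.1.1*z.1.2 = z.2.1*z.2.2
        then V * (1/((z.1.1*z.1.2 : ℕ):ℝ)) else 0)
      = V * ∑ z ∈ (Q4 K).filter (fun z => z.1.1*z.1.2 = z.2.1*z.2.2),
          (1:ℝ)/((z.1.1*z.1.2 : ℕ):ℝ) := by
    rw [← Finset.sum_filter, Finset.mul_sum]
  have hsplit2 : (∑ z ∈ Q4 K, 4 * ρz z) = 4 * ∑ z ∈ Q4 K, ρz z := by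
    rw [Finset.mul_sum]
  have hsplit3 : (∑ z ∈ Q4 K, 3 * w0 (z.1.1*z.1.2) (z.2.1*z.2.2))
      = 3 * ∑ z ∈ Q4 K, w0 (z.1.1*z.1.2) (z.2.1*z.2.2) := by
    rw [Finset.mul_sum]
  rw [hsplit1, hsplit2, hsplit3]
  -- bound the three pieces
  have hD : V * (∑ z ∈ (Q4 K).filter (fun z => z.1.1*z.1.2 = z.2.1*z.2.2),
      (1:ℝ)/((z.1.1*z.1.2 : ℕ):ℝ)) ≤ V * (16 * L^4) := by
    apply mul_le_mul_of_nonneg_left _ hV0.le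
    refine le_trans (diag_sum_le K) ?_
    have h1 : (∑ n ∈ Finset.Icc 1 K, (1:ℝ)/n) ≤ 2*L := le_trans (harmonic_le K) hA
    have h0 : (0:ℝ) ≤ ∑ n ∈ Finset.Icc 1 K, (1:ℝ)/n := by
      apply Finset.sum_nonneg; intro i _; positivity
    calc (∑ n ∈ Finset.Icc 1 K, (1:ℝ)/n)^4 ≤ (2*L)^4 := pow_le_pow_left₀ h0 h1 4
      _ = 16 * L^4 := by ring
  have hR : 4 * (∑ z ∈ Q4 K, ρz z) ≤ 64 * (V/6) := by
    rw [sum_ρz_Q4 K]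
    have h1 : (∑ n ∈ Finset.Icc 1 K, (n:ℝ)^(-(1/2):ℝ)) ≤ 2*Real.sqrt K := by
      refine le_trans (le_of_eq ?_) (sqrtsum_le K)
      apply Finset.sum_congr rfl
      intro n hn
      obtain ⟨hn1, _⟩ := Finset.mem_Icc.mp hn
      rw [rpow_half_inv (by positivity)]
    have h0 : (0:ℝ) ≤ ∑ n ∈ Finset.Icc 1 K, (n:ℝ)^(-(1/2):ℝ) := by
      apply Finset.sum_nonneg; intro i _; positivity
    have h2 : (∑ n ∈ Finset.Icc 1 K, (n:ℝ)^(-(1/2):ℝ))^4 ≤ (2*Real.sqrt K)^4 :=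
      pow_le_pow_left₀ h0 h1 4
    have h3 : (2*Real.sqrt (K:ℝ))^4 = 16 * ((K:ℝ))^2 := by
      have : Real.sqrt (K:ℝ)^2 = (K:ℝ) := Real.sq_sqrt (by positivity)
      nlinarith [this]
    nlinarith [h2, h3, hK2']
  have hS3 : 3 * (∑ z ∈ Q4 K, w0 (z.1.1*z.1.2) (z.2.1*z.2.2)) ≤ 8 * V * L^3 := by
    have h1 := S3_bound K
    have hcard : (((Q4 K).filter (fun z => z.1.1*z.1.2 = z.2.1*z.2.2)).card : ℝ)
        ≤ ((K:ℝ) * (Real.log K + 1))^2 := by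
      have hc1 : (((Q4 K).filter (fun z => z.1.1*z.1.2 = z.2.1*z.2.2)).card : ℝ)
          ≤ (((S2set K).card : ℝ))^2 := by
        exact_mod_cast diag_card_le K
      refine le_trans hc1 ?_
      apply pow_le_pow_left₀ (by positivity) (S2card_le K) 2
    have hlogKK : Real.log ((K*K : ℕ):ℝ) + 1 ≤ 2*L := by
      have : ((K*K : ℕ):ℝ) = (K:ℝ)*(K:ℝ) := by push_cast; ring
      rw [this, Real.log_mul (by positivity) (by positivity)]
      linarith
    have hlogKK0 : (0:ℝ) ≤ Real.log ((K*K : ℕ):ℝ) + 1 := by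
      have : (1:ℝ) ≤ ((K*K : ℕ):ℝ) := by
        push_cast
        nlinarith
      linarith [Real.log_nonneg this]
    have hKA2 : ((K:ℝ) * (Real.log K + 1))^2 ≤ (V/6) * (2*L)^2 := by
      have : ((K:ℝ) * (Real.log K + 1))^2 = (K:ℝ)^2 * (Real.log K + 1)^2 := by ring
      rw [this]
      apply mul_le_mul hK2' (pow_le_pow_left₀ hA0 hA 2) (by positivity) (by positivity)
    have hw0sum : (0:ℝ) ≤ ∑ z ∈ Q4 K, w0 (z.1.1*z.1.2) (z.2.1*z.2.2) := by
      apply Finset.sum_nonneg; intro z _; exact w0_nonneg _ _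
    have step : (∑ z ∈ Q4 K, w0 (z.1.1*z.1.2) (z.2.1*z.2.2))
        ≤ ((V/6) * (2*L)^2) * (2*(2*L)) := by
      refine le_trans h1 ?_
      have e1 : (((Q4 K).filter (fun z => z.1.1*z.1.2 = z.2.1*z.2.2)).card : ℝ)
          * (2*(Real.log ((K*K : ℕ):ℝ) + 1))
          ≤ ((K:ℝ) * (Real.log K + 1))^2 * (2*(2*L)) := by
        apply mul_le_mul hcard (by linarith) (by linarith) (by positivity)
      refine le_trans (le_of_eq ?_) (le_trans e1 ?_)
      · push_cast
        ring_nf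
      · apply mul_le_mul_of_nonneg_right hKA2 (by linarith)
    nlinarith [step, hLe, hV0]
  refine le_trans (add_le_add (add_le_add hD hR) hS3) ?_
  -- final numerics
  have hL4 : L^4 ≤ L^10 := pow_le_pow_right₀ hLe (by norm_num)
  have hL3 : L^3 ≤ L^10 := by
    calc L^3 ≤ L^4 := pow_le_pow_right₀ hLe (by norm_num)
      _ ≤ L^10 := hL4
  have hL10 : (1:ℝ) ≤ L^10 := by
    calc (1:ℝ) = 1^10 := by norm_num
      _ ≤ L^10 := pow_le_pow_left₀ (by norm_num) hLe 10
  have f1 : V * L^4 ≤ V * L^10 := mul_le_mul_of_nonneg_left hL4 hV0.le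
  have f2 : V * L^3 ≤ V * L^10 := mul_le_mul_of_nonneg_left hL3 hV0.le
  have f3 : V * 1 ≤ V * L^10 := mul_le_mul_of_nonneg_left hL10 hV0.le
  nlinarith [f1, f2, f3, hV0]
end

section
/- Let α, β be nonzero reals, T ≥ 1, and let F(t) := Σ_{K<k≤2K} a_k (k+θ)^{it}, G(t) := Σ_{L<l≤2L} b_l (l+ξ)^{it}, D(t) := Σ_{K<k≤2K} (k+θ)^{it}, E(t) := Σ_{L<l≤2L} (l+ξ)^{it}, where |a_k| ≤ 1, |b_l| ≤ 1 and 0 ≤ θ, ξ < 1. Then ∫_0^T |F(αt) G(βt)|^2 dt ≪ (KL)^2 + (log T) · max_{1 ≤ V ≤ T} ∫_V^{2V} |D(αt) E(βt)|^2 dt. -/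
open Complex Real Finset MeasureTheory intervalIntegral

namespace RedUnit

noncomputable def fej (S t : ℝ) : ℝ := 1 - |t| / S

lemma fej_cont (S : ℝ) : Continuous (fej S) := by
  unfold fej; fun_prop

lemma fej_nonneg {S t : ℝ} (hS : 0 < S) (h : |t| ≤ S) : 0 ≤ fej S t := by
  unfold fej
  have : |t| / S ≤ 1 := (div_le_one hS).2 h
  linarith

lemma fej_le_one {S t : ℝ} (hS : 0 < S) : fej S t ≤ 1 := by
  unfold fej
  have : 0 ≤ |t| / S := by positivity
  linarith

lemma fej_half {S t : ℝ} (hS : 0 < S) (h : |t| ≤ S / 2) : 1 / 2 ≤ fej S t := by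
  unfold fej
  have : |t| / S ≤ 1 / 2 := by rw [div_le_div_iff₀ hS (by norm_num)]; linarith
  linarith

lemma even_integral {S : ℝ} {f : ℝ → ℝ} (hf : Continuous f) (he : ∀ t, f (-t) = f t) :
    ∫ t in (-S)..S, f t = 2 * ∫ t in (0:ℝ)..S, f t := by
  have h1 : ∫ t in (-S)..(0:ℝ), f t = ∫ t in (0:ℝ)..S, f t := by
    have := intervalIntegral.integral_comp_neg (a := (0:ℝ)) (b := S) (fun y => f y)
    simp only [neg_zero] at this
    rw [← this]
    simp [he]
  rw [← intervalIntegral.integral_add_adjacent_intervals (a := -S) (b := 0) (c := S)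
    (hf.intervalIntegrable _ _) (hf.intervalIntegrable _ _), h1]
  ring

lemma odd_integral {S : ℝ} {f : ℝ → ℝ} (hf : Continuous f) (he : ∀ t, f (-t) = - f t) :
    ∫ t in (-S)..S, f t = 0 := by
  have h1 : ∫ t in (-S)..(0:ℝ), f t = - ∫ t in (0:ℝ)..S, f t := by
    have := intervalIntegral.integral_comp_neg (a := (0:ℝ)) (b := S) (fun y => f y)
    simp only [neg_zero] at this
    rw [← this]
    simp [he, intervalIntegral.integral_neg]
  rw [← intervalIntegral.integral_add_adjacent_intervals (a := -S) (b := 0) (c := S)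
    (hf.intervalIntegrable _ _) (hf.intervalIntegrable _ _), h1]
  ring


lemma fej_integral_nonneg {S : ℝ} (hS : 0 < S) (γ : ℝ) :
    0 ≤ ∫ t in (-S)..S, fej S t * Real.cos (γ * t) := by
  have hcont : Continuous fun t => fej S t * Real.cos (γ * t) := by
    unfold fej; fun_prop
  rcases eq_or_ne γ 0 with h | h
  · subst h
    simp only [zero_mul, Real.cos_zero, mul_one]
    apply intervalIntegral.integral_nonneg (by linarith)
    intro u hu
    unfold fej
    have h1 : |u| ≤ S := abs_le.2 ⟨hu.1, hu.2⟩
    have : |u| / S ≤ 1 := (div_le_one hS).2 h1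
    linarith
  · have heven : ∫ t in (-S)..S, fej S t * Real.cos (γ * t)
        = 2 * ∫ t in (0:ℝ)..S, fej S t * Real.cos (γ * t) := by
      apply even_integral hcont
      intro t; unfold fej; rw [abs_neg, mul_neg, Real.cos_neg]
    rw [heven]
    have hcongr : ∫ t in (0:ℝ)..S, fej S t * Real.cos (γ * t)
        = ∫ t in (0:ℝ)..S, (1 - t / S) * Real.cos (γ * t) := by
      apply intervalIntegral.integral_congr
      intro t ht
      rw [Set.uIcc_of_le (by linarith : (0:ℝ) ≤ S)] at ht
      show (1 - |t| / S) * Real.cos (γ * t) = _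
      rw [_root_.abs_of_nonneg ht.1]
    have hftc : ∫ t in (0:ℝ)..S, (1 - t / S) * Real.cos (γ * t)
        = (1 - Real.cos (γ * S)) / (S * γ ^ 2) := by
      have hd : ∀ t ∈ Set.uIcc (0:ℝ) S, HasDerivAt
          (fun t => (1 - t / S) * (Real.sin (γ * t) / γ) - Real.cos (γ * t) / (S * γ ^ 2))
          ((1 - t / S) * Real.cos (γ * t)) t := by
        intro t _
        have h1 : HasDerivAt (fun t : ℝ => γ * t) γ t := by
          simpa using (hasDerivAt_id t).const_mul γ
        have hsin : HasDerivAt (fun t => Real.sin (γ * t)) (Real.cos (γ * t) * γ) t := h1.sin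
        have hcos : HasDerivAt (fun t => Real.cos (γ * t)) (-Real.sin (γ * t) * γ) t := h1.cos
        have hlin : HasDerivAt (fun t : ℝ => 1 - t / S) (-(1 / S)) t := by
          simpa using ((hasDerivAt_id t).div_const S).const_sub 1
        have := (hlin.mul (hsin.div_const γ)).sub (hcos.div_const (S * γ ^ 2))
        refine this.congr_deriv ?_
        field_simp
        ring
      rw [intervalIntegral.integral_eq_sub_of_hasDerivAt hd
        (by apply Continuous.intervalIntegrable; fun_prop)]
      have hSne : S ≠ 0 := ne_of_gt hS
      field_simp
      simp only [mul_zero, sub_zero, sub_self, zero_mul, Real.sin_zero, Real.cos_zero]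
      ring
    rw [hcongr, hftc]
    have : 0 ≤ (1 - Real.cos (γ * S)) := by linarith [Real.cos_le_one (γ * S)]
    positivity


lemma re_exp_eq (γ t : ℝ) (z : ℂ) :
    (z * Complex.exp (Complex.I * (γ * t))).re
      = z.re * Real.cos (γ * t) - z.im * Real.sin (γ * t) := by
  have hrw : Complex.I * ((γ:ℂ) * t) = ((γ * t : ℝ) : ℂ) * Complex.I := by push_cast; ring
  rw [Complex.mul_re, hrw, Complex.exp_ofReal_mul_I_re, Complex.exp_ofReal_mul_I_im]

lemma cross {S : ℝ} (hS : 0 < S) (γ : ℝ) (z : ℂ) (hz : ‖z‖ ≤ 1) :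
    ∫ t in (-S)..S, fej S t * (z * Complex.exp (Complex.I * (γ * t))).re
      ≤ ∫ t in (-S)..S, fej S t * Real.cos (γ * t) := by
  have hfc : Continuous (fej S) := by unfold fej; fun_prop
  have heq : (fun t => fej S t * (z * Complex.exp (Complex.I * (γ * t))).re)
      = fun t => z.re * (fej S t * Real.cos (γ * t)) - z.im * (fej S t * Real.sin (γ * t)) := by
    funext t
    rw [re_exp_eq]
    ring
  rw [heq]
  rw [intervalIntegral.integral_sub (by apply Continuous.intervalIntegrable; fun_prop)
      (by apply Continuous.intervalIntegrable; fun_prop),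
    intervalIntegral.integral_const_mul, intervalIntegral.integral_const_mul]
  have hodd : ∫ t in (-S)..S, fej S t * Real.sin (γ * t) = 0 := by
    apply odd_integral (by fun_prop)
    intro t
    unfold fej
    rw [abs_neg, mul_neg, Real.sin_neg]
    ring
  rw [hodd, mul_zero, sub_zero]
  have hG := fej_integral_nonneg hS γ
  have hre : z.re ≤ 1 := le_trans (le_trans (le_abs_self _) (Complex.abs_re_le_norm z)) hz
  nlinarith

lemma norm_sq_expand {ι : Type*} (s : Finset ι) (γ : ι → ℝ) (c : ι → ℂ) (t : ℝ) :
    ‖∑ i ∈ s, c i * Complex.exp (Complex.I * (γ i * t))‖ ^ 2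
      = ∑ p ∈ s ×ˢ s, (c p.1 * (starRingEnd ℂ) (c p.2)
          * Complex.exp (Complex.I * ((↑(γ p.1 - γ p.2) : ℂ) * (t:ℂ)))).re := by
  have key : ∀ i j : ι,
      (c i * Complex.exp (Complex.I * (γ i * t)))
        * (starRingEnd ℂ) (c j * Complex.exp (Complex.I * (γ j * t)))
      = c i * (starRingEnd ℂ) (c j) * Complex.exp (Complex.I * ((γ i - γ j) * t)) := by
    intro i j
    rw [map_mul, ← Complex.exp_conj]
    have hc : (starRingEnd ℂ) (Complex.I * ((γ j : ℂ) * t)) = -(Complex.I * ((γ j : ℂ) * t)) := by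
      simp [map_mul, Complex.conj_I, Complex.conj_ofReal]
    rw [hc, mul_mul_mul_comm, ← Complex.exp_add]
    congr 2
    push_cast
    ring
  set P := ∑ i ∈ s, c i * Complex.exp (Complex.I * (γ i * t)) with hP
  have h1 : ‖P‖ ^ 2 = (P * (starRingEnd ℂ) P).re := by
    rw [Complex.mul_conj, Complex.ofReal_re, Complex.normSq_eq_norm_sq]
  rw [h1]
  rw [hP, map_sum, Finset.sum_mul_sum, ← Finset.sum_product', Complex.re_sum]
  refine Finset.sum_congr rfl fun p _ => ?_
  rw [key p.1 p.2]
  norm_cast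


lemma cont_P {ι : Type*} (s : Finset ι) (γ : ι → ℝ) (c : ι → ℂ) :
    Continuous fun t : ℝ => ‖∑ i ∈ s, c i * Complex.exp (Complex.I * (γ i * t))‖ ^ 2 := by
  fun_prop

lemma majorant {ι : Type*} (s : Finset ι) (γ : ι → ℝ) (c : ι → ℂ)
    (hc : ∀ i ∈ s, ‖c i‖ ≤ 1) {T : ℝ} (hT : 0 ≤ T) :
    ∫ t in (0:ℝ)..T, ‖∑ i ∈ s, c i * Complex.exp (Complex.I * (γ i * t))‖ ^ 2
      ≤ 4 * ∫ t in (0:ℝ)..(2*T), ‖∑ i ∈ s, Complex.exp (Complex.I * (γ i * t))‖ ^ 2 := by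
  rcases eq_or_lt_of_le hT with h0 | hT0
  · simp [← h0]
  set S := 2 * T with hS
  have hSpos : 0 < S := by positivity
  set P := fun t : ℝ => ‖∑ i ∈ s, c i * Complex.exp (Complex.I * (γ i * t))‖ ^ 2 with hPdef
  set Q := fun t : ℝ => ‖∑ i ∈ s, Complex.exp (Complex.I * (γ i * t))‖ ^ 2 with hQdef
  have hPc : Continuous P := cont_P s γ c
  have hQc : Continuous Q := by
    have := cont_P s γ (fun _ => 1)
    simpa using this
  have hP0 : ∀ t, 0 ≤ P t := fun t => by positivity
  have hQ0 : ∀ t, 0 ≤ Q t := fun t => by positivity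
  have step1 : ∫ t in (0:ℝ)..T, P t ≤ ∫ t in (0:ℝ)..T, 2 * (fej S t * P t) := by
    apply intervalIntegral.integral_mono_on hT
      (hPc.intervalIntegrable _ _) (by apply Continuous.intervalIntegrable; unfold fej; fun_prop)
    intro t ht
    have habs : |t| ≤ S / 2 := by
      rw [_root_.abs_of_nonneg ht.1]
      simp only [hS]
      linarith [ht.2]
    have := fej_half hSpos habs
    nlinarith [hP0 t]
  have step2 : ∫ t in (0:ℝ)..T, 2 * (fej S t * P t) ≤ ∫ t in (-S)..S, 2 * (fej S t * P t) := by
    have hint : ∀ a b : ℝ, IntervalIntegrable (fun t => 2 * (fej S t * P t)) volume a b := by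
      intro a b; apply Continuous.intervalIntegrable; unfold fej; fun_prop
    have hnn : ∀ t, -S ≤ t → t ≤ S → 0 ≤ 2 * (fej S t * P t) := by
      intro t h1 h2
      have : 0 ≤ fej S t := fej_nonneg hSpos (abs_le.2 ⟨h1, h2⟩)
      have := hP0 t
      positivity
    have hTS : T ≤ S := by simp only [hS]; linarith
    rw [← intervalIntegral.integral_add_adjacent_intervals (a := -S) (b := 0) (c := S)
        (hint _ _) (hint _ _),
      ← intervalIntegral.integral_add_adjacent_intervals (a := (0:ℝ)) (b := T) (c := S)
        (hint _ _) (hint _ _)]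
    have h1 : 0 ≤ ∫ t in (-S)..(0:ℝ), 2 * (fej S t * P t) := by
      apply intervalIntegral.integral_nonneg (by linarith)
      intro u hu; exact hnn u hu.1 (le_trans hu.2 hSpos.le)
    have h2 : 0 ≤ ∫ t in T..S, 2 * (fej S t * P t) := by
      apply intervalIntegral.integral_nonneg hTS
      intro u hu; exact hnn u (by linarith [hu.1]) hu.2
    linarith
  have step4 : ∫ t in (-S)..S, fej S t * P t ≤ ∫ t in (-S)..S, fej S t * Q t := by
    have hexp : ∀ (c : ι → ℂ), (fun t => fej S t * ‖∑ i ∈ s, c i * Complex.exp (Complex.I * (γ i * t))‖ ^ 2)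
        = fun t => ∑ p ∈ s ×ˢ s, fej S t * (c p.1 * (starRingEnd ℂ) (c p.2)
            * Complex.exp (Complex.I * ((↑(γ p.1 - γ p.2) : ℂ) * (t:ℂ)))).re := by
      intro c; funext t
      rw [norm_sq_expand, Finset.mul_sum]
    have hint : ∀ (z : ℂ) (δ : ℝ), IntervalIntegrable
        (fun t => fej S t * (z * Complex.exp (Complex.I * (δ * t))).re) volume (-S) S := by
      intro z δ; apply Continuous.intervalIntegrable; unfold fej; fun_prop
    have hsplit : ∀ (c : ι → ℂ), ∫ t in (-S)..S, fej S t *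
          ‖∑ i ∈ s, c i * Complex.exp (Complex.I * (γ i * t))‖ ^ 2
        = ∑ p ∈ s ×ˢ s, ∫ t in (-S)..S, fej S t * (c p.1 * (starRingEnd ℂ) (c p.2)
            * Complex.exp (Complex.I * ((↑(γ p.1 - γ p.2) : ℂ) * (t:ℂ)))).re := by
      intro c
      rw [hexp c]
      exact intervalIntegral.integral_finset_sum (fun p _ => hint _ _)
    rw [hPdef, hQdef]
    simp only
    have hQalt : (fun t : ℝ => ‖∑ i ∈ s, Complex.exp (Complex.I * (γ i * t))‖ ^ 2)
        = fun t : ℝ => ‖∑ i ∈ s, (fun _ => (1:ℂ)) i * Complex.exp (Complex.I * (γ i * t))‖ ^ 2 := by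
      funext t; simp
    calc ∫ t in (-S)..S, fej S t * ‖∑ i ∈ s, c i * Complex.exp (Complex.I * (γ i * t))‖ ^ 2
        = ∑ p ∈ s ×ˢ s, ∫ t in (-S)..S, fej S t * (c p.1 * (starRingEnd ℂ) (c p.2)
            * Complex.exp (Complex.I * ((↑(γ p.1 - γ p.2) : ℂ) * (t:ℂ)))).re := hsplit c
      _ ≤ ∑ p ∈ s ×ˢ s, ∫ t in (-S)..S, fej S t * Real.cos ((γ p.1 - γ p.2) * t) := by
          apply Finset.sum_le_sum
          intro p hp
          have hp1 : p.1 ∈ s := (Finset.mem_product.1 hp).1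
          have hp2 : p.2 ∈ s := (Finset.mem_product.1 hp).2
          have h1 : ‖c p.1 * (starRingEnd ℂ) (c p.2)‖ ≤ 1 := by
            rw [norm_mul, RCLike.norm_conj]
            exact mul_le_one₀ (hc _ hp1) (norm_nonneg _) (hc _ hp2)
          exact cross hSpos (γ p.1 - γ p.2) (c p.1 * (starRingEnd ℂ) (c p.2)) h1
      _ = ∫ t in (-S)..S, fej S t * ‖∑ i ∈ s, Complex.exp (Complex.I * (γ i * t))‖ ^ 2 := by
          have h1t : ∀ (δ u : ℝ), (Complex.exp (Complex.I * ((δ:ℂ) * u))).re = Real.cos (δ * u) := by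
            intro δ u
            have := re_exp_eq δ u 1
            simpa using this
          have hone : ∫ t in (-S)..S, fej S t * ‖∑ i ∈ s, (fun _ : ι => (1:ℂ)) i
                * Complex.exp (Complex.I * (γ i * t))‖ ^ 2
              = ∑ p ∈ s ×ˢ s, ∫ t in (-S)..S, fej S t * ((fun _ : ι => (1:ℂ)) p.1
                * (starRingEnd ℂ) ((fun _ : ι => (1:ℂ)) p.2)
                * Complex.exp (Complex.I * ((↑(γ p.1 - γ p.2) : ℂ) * (t:ℂ)))).re := hsplit _
          simp only [one_mul, map_one] at hone
          rw [hone]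
          refine Finset.sum_congr rfl fun p _ => ?_
          apply intervalIntegral.integral_congr
          intro t _
          simp only [h1t]
  have step5 : ∫ t in (-S)..S, fej S t * Q t ≤ ∫ t in (-S)..S, Q t := by
    apply intervalIntegral.integral_mono_on (by linarith)
      (by apply Continuous.intervalIntegrable; unfold fej; fun_prop)
      (hQc.intervalIntegrable _ _)
    intro t ht
    have h1 := fej_le_one (t := t) hSpos
    nlinarith [hQ0 t]
  have step6 : ∫ t in (-S)..S, Q t = 2 * ∫ t in (0:ℝ)..S, Q t := by
    apply even_integral hQc
    intro t
    rw [hQdef]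
    simp only
    have h2 : ∑ i ∈ s, Complex.exp (Complex.I * ((γ i : ℂ) * ((-t : ℝ) : ℂ)))
        = (starRingEnd ℂ) (∑ i ∈ s, Complex.exp (Complex.I * ((γ i : ℂ) * (t : ℂ)))) := by
      rw [map_sum]
      apply Finset.sum_congr rfl
      intro i _
      rw [← Complex.exp_conj]
      congr 1
      simp only [map_mul, Complex.conj_I, Complex.conj_ofReal]
      push_cast
      ring
    rw [h2, RCLike.norm_conj]
  have e3 : ∫ t in (-S)..S, 2 * (fej S t * P t) = 2 * ∫ t in (-S)..S, fej S t * P t :=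
    intervalIntegral.integral_const_mul _ _
  calc ∫ t in (0:ℝ)..T, P t ≤ ∫ t in (-S)..S, 2 * (fej S t * P t) := step1.trans step2
    _ = 2 * ∫ t in (-S)..S, fej S t * P t := e3
    _ ≤ 2 * ∫ t in (-S)..S, fej S t * Q t := by linarith
    _ ≤ 2 * ∫ t in (-S)..S, Q t := by linarith
    _ = 4 * ∫ t in (0:ℝ)..S, Q t := by rw [step6]; ring


lemma dyadic (Q : ℝ → ℝ) (hQc : Continuous Q) (hQ0 : ∀ t, 0 ≤ Q t)
    (B : ℝ) (hB0 : 0 ≤ B) (hB : ∀ t, Q t ≤ B) {T : ℝ} (hT : 2 ≤ T)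
    (M : ℝ) (hM : ∀ V, 1 ≤ V → V ≤ T → ∫ t in V..(2*V), Q t ≤ M) :
    ∫ t in (0:ℝ)..(2*T), Q t ≤ B + 5 * Real.log T * M := by
  have hint : ∀ a b : ℝ, IntervalIntegrable Q volume a b := fun a b =>
    hQc.intervalIntegrable _ _
  have hM0 : 0 ≤ M := le_trans (intervalIntegral.integral_nonneg (by norm_num)
    (fun u _ => hQ0 u)) (hM 1 le_rfl (by linarith))
  have hpos : ∀ a b : ℝ, a ≤ b → 0 ≤ ∫ t in a..b, Q t := fun a b hab =>
    intervalIntegral.integral_nonneg hab (fun u _ => hQ0 u)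
  -- part ∫_0^1 ≤ B
  have h01 : ∫ t in (0:ℝ)..1, Q t ≤ B := by
    calc ∫ t in (0:ℝ)..1, Q t ≤ ∫ t in (0:ℝ)..1, B := by
          apply intervalIntegral.integral_mono_on (by norm_num) (hint _ _)
            (intervalIntegrable_const)
          exact fun u _ => hB u
      _ = B := by simp
  -- dyadic claim
  have claim : ∀ j : ℕ, ∫ t in (1:ℝ)..(2 * min ((2:ℝ)^j) T), Q t ≤ (j + 1) * M := by
    intro j
    induction j with
    | zero =>
      simp only [pow_zero, min_eq_left (by linarith : (1:ℝ) ≤ T)]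
      have := hM 1 le_rfl (by linarith)
      simpa using this
    | succ j ih =>
      set Vj := min ((2:ℝ)^j) T with hVj
      set Vj1 := min ((2:ℝ)^(j+1)) T with hVj1
      have h2j : (1:ℝ) ≤ (2:ℝ)^j := one_le_pow₀ (by norm_num)
      have hVj_ge : 1 ≤ Vj := le_min h2j (by linarith)
      have hVj1_ge : 1 ≤ Vj1 := le_min (one_le_pow₀ (by norm_num)) (by linarith)
      have hVjT : Vj ≤ T := min_le_right _ _
      have hVj1T : Vj1 ≤ T := min_le_right _ _
      have hmono : Vj ≤ Vj1 := by
        apply min_le_min _ le_rfl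
        apply pow_le_pow_right₀ (by norm_num)
        omega
      have hdouble : Vj1 ≤ 2 * Vj := by
        rcases le_total ((2:ℝ)^j) T with h | h
        · rw [hVj, min_eq_left h]
          calc Vj1 ≤ (2:ℝ)^(j+1) := min_le_left _ _
            _ = 2 * (2:ℝ)^j := by ring
        · rw [hVj, min_eq_right h, hVj1, min_eq_right (le_trans h (pow_le_pow_right₀ (by norm_num) (Nat.le_succ j)))]
          linarith
      have split1 : ∫ t in (1:ℝ)..(2*Vj1), Q t
          = (∫ t in (1:ℝ)..(2*Vj), Q t) + ∫ t in (2*Vj)..(2*Vj1), Q t :=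
        (intervalIntegral.integral_add_adjacent_intervals (hint _ _) (hint _ _)).symm
      have split2 : ∫ t in Vj1..(2*Vj1), Q t
          = (∫ t in Vj1..(2*Vj), Q t) + ∫ t in (2*Vj)..(2*Vj1), Q t :=
        (intervalIntegral.integral_add_adjacent_intervals (hint _ _) (hint _ _)).symm
      have htail : ∫ t in (2*Vj)..(2*Vj1), Q t ≤ ∫ t in Vj1..(2*Vj1), Q t := by
        have := hpos Vj1 (2*Vj) hdouble
        linarith [split2]
      have hlast : ∫ t in Vj1..(2*Vj1), Q t ≤ M := hM Vj1 hVj1_ge hVj1T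
      rw [split1]
      push_cast
      nlinarith [ih]
  -- choose j
  set m : ℕ := ⌊Real.logb 2 T⌋₊ + 1 with hm
  have hTpos : (0:ℝ) < T := by linarith
  have hlogb_nonneg : 0 ≤ Real.logb 2 T := Real.logb_nonneg (by norm_num) (by linarith)
  have hTle : T ≤ (2:ℝ)^m := by
    have h1 : Real.logb 2 T ≤ (m : ℝ) := by
      rw [hm]
      push_cast
      linarith [Nat.lt_floor_add_one (Real.logb 2 T)]
    calc T = (2:ℝ) ^ Real.logb 2 T := (Real.rpow_logb (by norm_num) (by norm_num) hTpos).symm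
      _ ≤ (2:ℝ) ^ (m:ℝ) := Real.rpow_le_rpow_of_exponent_le (by norm_num) h1
      _ = (2:ℝ)^m := by rw [Real.rpow_natCast]
  have hminT : min ((2:ℝ)^m) T = T := min_eq_right hTle
  have hmain := claim m
  rw [hminT] at hmain
  -- count bound : (m+1 : ℝ) ≤ 5 * log T
  have hcount : ((m:ℝ) + 1) ≤ 5 * Real.log T := by
    have hfloor : (⌊Real.logb 2 T⌋₊ : ℝ) ≤ Real.logb 2 T := Nat.floor_le hlogb_nonneg
    have hlogb1 : 1 ≤ Real.logb 2 T := by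
      rw [Real.le_logb_iff_rpow_le (by norm_num) hTpos]
      simpa using hT
    have hlogb_def : Real.logb 2 T = Real.log T / Real.log 2 := rfl
    have hlog2 : (0.6931471803:ℝ) < Real.log 2 := Real.log_two_gt_d9
    have hlogT : 0 < Real.log T := Real.log_pos (by linarith)
    have h3 : (m:ℝ) + 1 ≤ Real.logb 2 T + 2 := by
      rw [hm]; push_cast; linarith
    have h4 : Real.logb 2 T + 2 ≤ 3 * Real.logb 2 T := by linarith
    have h5 : 3 * Real.logb 2 T ≤ 5 * Real.log T := by
      rw [hlogb_def, show 3 * (Real.log T / Real.log 2) = (3 / Real.log 2) * Real.log T by ring]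
      apply mul_le_mul_of_nonneg_right _ hlogT.le
      rw [div_le_iff₀ (by linarith)]
      linarith
    linarith
  -- combine
  have hsplit0 : ∫ t in (0:ℝ)..(2*T), Q t
      = (∫ t in (0:ℝ)..1, Q t) + ∫ t in (1:ℝ)..(2*T), Q t :=
    (intervalIntegral.integral_add_adjacent_intervals (hint _ _) (hint _ _)).symm
  rw [hsplit0]
  have : ∫ t in (1:ℝ)..(2*T), Q t ≤ 5 * Real.log T * M := by
    calc ∫ t in (1:ℝ)..(2*T), Q t ≤ ((m:ℝ) + 1) * M := hmain
      _ ≤ 5 * Real.log T * M := mul_le_mul_of_nonneg_right hcount hM0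
  linarith


lemma cpow_eq_exp {x : ℝ} (hx : 0 < x) (s t : ℝ) :
    ((x:ℂ)) ^ (Complex.I * ((s:ℂ) * (t:ℂ)))
      = Complex.exp (Complex.I * ((↑(s * Real.log x) : ℂ) * (t:ℂ))) := by
  rw [Complex.cpow_def_of_ne_zero (by exact_mod_cast ne_of_gt hx)]
  rw [← Complex.ofReal_log hx.le]
  congr 1
  push_cast
  ring

lemma norm_exp_I_mul (x t : ℝ) : ‖Complex.exp (Complex.I * ((x:ℂ) * (t:ℂ)))‖ = 1 := by
  rw [Complex.norm_exp]
  simp [Complex.mul_re]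

lemma prod_expand (α β θ ξ : ℝ) (hθ : 0 ≤ θ) (hξ : 0 ≤ ξ) (K L : ℕ) (a b : ℕ → ℂ) (t : ℝ) :
    (∑ k ∈ Finset.Ioc K (2 * K), a k * ((k : ℂ) + θ) ^ (Complex.I * (α * t))) *
      (∑ l ∈ Finset.Ioc L (2 * L), b l * ((l : ℂ) + ξ) ^ (Complex.I * (β * t)))
    = ∑ p ∈ (Finset.Ioc K (2*K)) ×ˢ (Finset.Ioc L (2*L)), (a p.1 * b p.2)
        * Complex.exp (Complex.I *
            ((↑(α * Real.log (p.1 + θ) + β * Real.log (p.2 + ξ)) : ℂ) * (t:ℂ))) := by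
  have hterm : ∀ (θ' s' : ℝ), 0 ≤ θ' → ∀ n : ℕ, 1 ≤ n →
      ((n : ℂ) + θ') ^ (Complex.I * ((s':ℂ) * (t:ℂ)))
        = Complex.exp (Complex.I * ((↑(s' * Real.log (n + θ')) : ℂ) * (t:ℂ))) := by
    intro θ' s' hθ' n hn
    have hx : (0:ℝ) < (n:ℝ) + θ' := by
      have : (1:ℝ) ≤ (n:ℝ) := by exact_mod_cast hn
      linarith
    rw [show (n:ℂ) + (θ':ℂ) = ((((n:ℝ) + θ') : ℝ) : ℂ) by push_cast; ring]
    exact cpow_eq_exp hx s' t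
  rw [Finset.sum_mul_sum, ← Finset.sum_product']
  refine Finset.sum_congr rfl fun p hp => ?_
  have hp1 : p.1 ∈ Finset.Ioc K (2*K) := (Finset.mem_product.1 hp).1
  have hp2 : p.2 ∈ Finset.Ioc L (2*L) := (Finset.mem_product.1 hp).2
  have h1 : 1 ≤ p.1 := Nat.one_le_iff_ne_zero.2 (by
    have := (Finset.mem_Ioc.1 hp1).1; omega)
  have h2 : 1 ≤ p.2 := Nat.one_le_iff_ne_zero.2 (by
    have := (Finset.mem_Ioc.1 hp2).1; omega)
  rw [hterm θ α hθ p.1 h1, hterm ξ β hξ p.2 h2, mul_mul_mul_comm, ← Complex.exp_add]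
  congr 2
  push_cast
  ring


end RedUnit

open RedUnit in
theorem reduction_to_unit_coefficients :
    ∃ C : ℝ, 0 < C ∧ ∀ (α β θ ξ T : ℝ) (K L : ℕ) (a b : ℕ → ℂ),
      α ≠ 0 → β ≠ 0 → 0 ≤ θ → θ < 1 → 0 ≤ ξ → ξ < 1 → 1 ≤ T →
      (∀ k ∈ Finset.Ioc K (2 * K), ‖a k‖ ≤ 1) →
      (∀ l ∈ Finset.Ioc L (2 * L), ‖b l‖ ≤ 1) →
      ∫ t in (0:ℝ)..T,
          ‖(∑ k ∈ Finset.Ioc K (2 * K), a k * ((k : ℂ) + θ) ^ (Complex.I * (α * t))) *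
            (∑ l ∈ Finset.Ioc L (2 * L), b l * ((l : ℂ) + ξ) ^ (Complex.I * (β * t)))‖ ^ 2 ≤
        C * (((K : ℝ) * L) ^ 2 + Real.log T *
          ⨆ V ∈ Set.Icc (1 : ℝ) T,
            ∫ t in V..(2 * V),
              ‖(∑ k ∈ Finset.Ioc K (2 * K), ((k : ℂ) + θ) ^ (Complex.I * (α * t))) *
                (∑ l ∈ Finset.Ioc L (2 * L), ((l : ℂ) + ξ) ^ (Complex.I * (β * t)))‖ ^ 2) := by
  refine ⟨20, by norm_num, ?_⟩
  intro α β θ ξ T K L a b hα hβ hθ hθ1 hξ hξ1 hT ha hb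
  set s : Finset (ℕ × ℕ) := (Finset.Ioc K (2*K)) ×ˢ (Finset.Ioc L (2*L)) with hs
  set γ0 : ℕ × ℕ → ℝ := fun p => α * Real.log (p.1 + θ) + β * Real.log (p.2 + ξ) with hγ0
  set c0 : ℕ × ℕ → ℂ := fun p => a p.1 * b p.2 with hc0
  set B : ℝ := ((K:ℝ) * L) ^ 2 with hB
  have hB0 : 0 ≤ B := by positivity
  -- coefficient bound
  have hc : ∀ p ∈ s, ‖c0 p‖ ≤ 1 := by
    intro p hp
    rw [hc0]
    simp only
    rw [norm_mul]
    exact mul_le_one₀ (ha _ (Finset.mem_product.1 hp).1) (norm_nonneg _)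
      (hb _ (Finset.mem_product.1 hp).2)
  -- rewrite products
  have hprodA : ∀ t : ℝ,
      (∑ k ∈ Finset.Ioc K (2 * K), a k * ((k : ℂ) + θ) ^ (Complex.I * (α * t))) *
        (∑ l ∈ Finset.Ioc L (2 * L), b l * ((l : ℂ) + ξ) ^ (Complex.I * (β * t)))
      = ∑ p ∈ s, c0 p * Complex.exp (Complex.I * ((↑(γ0 p) : ℂ) * (t:ℂ))) := fun t =>
    prod_expand α β θ ξ hθ hξ K L a b t
  have hprod1 : ∀ t : ℝ,
      (∑ k ∈ Finset.Ioc K (2 * K), ((k : ℂ) + θ) ^ (Complex.I * (α * t))) *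
        (∑ l ∈ Finset.Ioc L (2 * L), ((l : ℂ) + ξ) ^ (Complex.I * (β * t)))
      = ∑ p ∈ s, Complex.exp (Complex.I * ((↑(γ0 p) : ℂ) * (t:ℂ))) := by
    intro t
    have h := prod_expand α β θ ξ hθ hξ K L (fun _ => 1) (fun _ => 1) t
    simp only [one_mul] at h
    exact h
  set Qf : ℝ → ℝ := fun t => ‖∑ p ∈ s, Complex.exp (Complex.I * ((↑(γ0 p) : ℂ) * (t:ℂ)))‖ ^ 2
    with hQf
  have hQc : Continuous Qf := by rw [hQf]; fun_prop
  have hQ0 : ∀ t, 0 ≤ Qf t := fun t => by positivity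
  have hcard : (s.card : ℝ) = (K:ℝ) * L := by
    rw [hs, Finset.card_product, Nat.card_Ioc, Nat.card_Ioc]
    push_cast [show 2*K - K = K from by omega, show 2*L - L = L from by omega]
    ring
  have hQB : ∀ t, Qf t ≤ B := by
    intro t
    rw [hQf, hB]
    simp only
    have h1 : ‖∑ p ∈ s, Complex.exp (Complex.I * ((↑(γ0 p) : ℂ) * (t:ℂ)))‖ ≤ (K:ℝ) * L := by
      calc ‖∑ p ∈ s, Complex.exp (Complex.I * ((↑(γ0 p) : ℂ) * (t:ℂ)))‖
          ≤ ∑ p ∈ s, ‖Complex.exp (Complex.I * ((↑(γ0 p) : ℂ) * (t:ℂ)))‖ := norm_sum_le _ _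
        _ = ∑ p ∈ s, 1 := (Finset.sum_congr rfl fun p _ => norm_exp_I_mul _ _)
        _ = (s.card : ℝ) := by simp
        _ = (K:ℝ) * L := hcard
    exact pow_le_pow_left₀ (norm_nonneg _) h1 2
  -- the sup
  set J := (fun V : ℝ => ∫ t in V..(2*V),
      ‖(∑ k ∈ Finset.Ioc K (2 * K), ((k : ℂ) + θ) ^ (Complex.I * (α * t))) *
        (∑ l ∈ Finset.Ioc L (2 * L), ((l : ℂ) + ξ) ^ (Complex.I * (β * t)))‖ ^ 2)
  have hJQ : ∀ V : ℝ, J V = ∫ t in V..(2*V), Qf t := by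
    intro V
    apply intervalIntegral.integral_congr
    intro t _
    simp only [hQf]
    exact congrArg (fun z : ℂ => ‖z‖ ^ 2) (hprod1 t)
  set f := (fun V : ℝ => ⨆ (_ : V ∈ Set.Icc (1:ℝ) T), J V)
  set M := (⨆ V : ℝ, f V)
  have hfval : ∀ V ∈ Set.Icc (1:ℝ) T, f V = J V := fun V hV => ciSup_pos hV
  have hfbound : ∀ V : ℝ, f V ≤ max 0 (T * B) := by
    intro V
    by_cases hV : V ∈ Set.Icc (1:ℝ) T
    · rw [hfval V hV]
      have h1 : 1 ≤ V := hV.1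
      have h2 : V ≤ T := hV.2
      have : J V ≤ T * B := by
        rw [hJQ]
        calc ∫ t in V..(2*V), Qf t ≤ ∫ t in V..(2*V), B := by
              apply intervalIntegral.integral_mono_on (by linarith)
                (hQc.intervalIntegrable _ _) intervalIntegrable_const
              exact fun u _ => hQB u
          _ = (2*V - V) * B := by rw [intervalIntegral.integral_const, smul_eq_mul]
          _ = V * B := by ring
          _ ≤ T * B := mul_le_mul_of_nonneg_right h2 hB0
      exact this.trans (le_max_right _ _)
    · haveI : IsEmpty (V ∈ Set.Icc (1:ℝ) T) := ⟨hV⟩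
      show (⨆ (_ : V ∈ Set.Icc (1:ℝ) T), J V) ≤ max 0 (T * B)
      rw [Real.iSup_of_isEmpty]
      exact le_max_left _ _
  have hbdd : BddAbove (Set.range f) := ⟨max 0 (T * B), by
    rintro x ⟨V, rfl⟩; exact hfbound V⟩
  have hM0 : 0 ≤ M := by
    apply Real.iSup_nonneg
    intro V
    by_cases hV : V ∈ Set.Icc (1:ℝ) T
    · rw [hfval V hV, hJQ]
      apply intervalIntegral.integral_nonneg (by linarith [hV.1])
      exact fun u _ => hQ0 u
    · haveI : IsEmpty (V ∈ Set.Icc (1:ℝ) T) := ⟨hV⟩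
      show (0:ℝ) ≤ ⨆ (_ : V ∈ Set.Icc (1:ℝ) T), J V
      rw [Real.iSup_of_isEmpty]
  have hVM : ∀ V, 1 ≤ V → V ≤ T → ∫ t in V..(2*V), Qf t ≤ M := by
    intro V h1 h2
    rw [← hJQ V, ← hfval V ⟨h1, h2⟩]
    exact le_ciSup hbdd V
  have hlogM : 0 ≤ Real.log T * M := mul_nonneg (Real.log_nonneg hT) hM0
  have e1 : ∫ t in (0:ℝ)..T,
        ‖(∑ k ∈ Finset.Ioc K (2 * K), a k * ((k : ℂ) + θ) ^ (Complex.I * (α * t))) *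
          (∑ l ∈ Finset.Ioc L (2 * L), b l * ((l : ℂ) + ξ) ^ (Complex.I * (β * t)))‖ ^ 2
      = ∫ t in (0:ℝ)..T, ‖∑ p ∈ s, c0 p * Complex.exp (Complex.I * ((↑(γ0 p) : ℂ) * (t:ℂ)))‖ ^ 2 := by
    apply intervalIntegral.integral_congr
    intro t _
    simp only
    exact congrArg (fun z : ℂ => ‖z‖ ^ 2) (hprodA t)
  have main : ∫ t in (0:ℝ)..T,
        ‖(∑ k ∈ Finset.Ioc K (2 * K), a k * ((k : ℂ) + θ) ^ (Complex.I * (α * t))) *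
          (∑ l ∈ Finset.Ioc L (2 * L), b l * ((l : ℂ) + ξ) ^ (Complex.I * (β * t)))‖ ^ 2
      ≤ 20 * (B + Real.log T * M) := by
    rw [e1]
    rcases le_or_gt 2 T with hT2 | hT2
    · have hmaj := majorant s γ0 c0 hc (by linarith : (0:ℝ) ≤ T)
      have hdy := dyadic Qf hQc hQ0 B hB0 hQB hT2 M hVM
      calc ∫ t in (0:ℝ)..T, ‖∑ p ∈ s, c0 p * Complex.exp (Complex.I * ((↑(γ0 p) : ℂ) * (t:ℂ)))‖ ^ 2
          ≤ 4 * ∫ t in (0:ℝ)..(2*T), Qf t := hmaj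
        _ ≤ 4 * (B + 5 * Real.log T * M) := by linarith
        _ ≤ 20 * (B + Real.log T * M) := by linarith
    · have hPB : ∀ t : ℝ, ‖∑ p ∈ s, c0 p * Complex.exp (Complex.I * ((↑(γ0 p) : ℂ) * (t:ℂ)))‖ ^ 2 ≤ B := by
        intro t
        have h1 : ‖∑ p ∈ s, c0 p * Complex.exp (Complex.I * ((↑(γ0 p) : ℂ) * (t:ℂ)))‖ ≤ (K:ℝ) * L := by
          calc ‖∑ p ∈ s, c0 p * Complex.exp (Complex.I * ((↑(γ0 p) : ℂ) * (t:ℂ)))‖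
              ≤ ∑ p ∈ s, ‖c0 p * Complex.exp (Complex.I * ((↑(γ0 p) : ℂ) * (t:ℂ)))‖ := norm_sum_le _ _
            _ ≤ ∑ p ∈ s, 1 := by
                apply Finset.sum_le_sum
                intro p hp
                rw [norm_mul, norm_exp_I_mul, mul_one]
                exact hc p hp
            _ = (s.card : ℝ) := by simp
            _ = (K:ℝ) * L := hcard
        rw [hB]
        exact pow_le_pow_left₀ (norm_nonneg _) h1 2
      have hcont : Continuous fun t : ℝ =>
          ‖∑ p ∈ s, c0 p * Complex.exp (Complex.I * ((↑(γ0 p) : ℂ) * (t:ℂ)))‖ ^ 2 := by fun_prop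
      calc ∫ t in (0:ℝ)..T, ‖∑ p ∈ s, c0 p * Complex.exp (Complex.I * ((↑(γ0 p) : ℂ) * (t:ℂ)))‖ ^ 2
          ≤ ∫ t in (0:ℝ)..T, B := by
            apply intervalIntegral.integral_mono_on (by linarith)
              (hcont.intervalIntegrable _ _) intervalIntegrable_const
            exact fun u _ => hPB u
        _ = T * B := by rw [intervalIntegral.integral_const, smul_eq_mul, sub_zero]
        _ ≤ 2 * B := mul_le_mul_of_nonneg_right hT2.le hB0
        _ ≤ 20 * (B + Real.log T * M) := by linarith
  exact main
end
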